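/- arXiv:2503.07220 — 10 statements merged into one kernel-verified Lean document; each statement's English description precedes it below -/
import Mathlib

section
/- Let D be a positive integer, M a subset of Euclidean space ℝ^D, p ∈ M, T a linear subspace of ℝ^D, and τ > 0. Assume that for every unit vector ν ∈ T^⊥ the open ball of radius τ centered at p + τ·ν is disjoint from M. Then for every x ∈ T and y ∈ T^⊥ such that p + x + y ∈ M, ‖x‖ ≤ τ, and ‖y‖ ≤ τ/2, one has ‖y‖ ≤ τ − √(τ² − ‖x‖²). -/
open scoped RealInnerProductSpace

/-- **Bounding Ball lemma.** If for every unit normal direction `ν` to `T` at `p` the open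
ball of radius `τ` centered at `p + τ • ν` is disjoint from `M`, then for every tangential
component `x ∈ T` and normal component `y ∈ Tᗮ` with `p + x + y ∈ M`, `‖x‖ ≤ τ` and
`‖y‖ ≤ τ/2`, we have `‖y‖ ≤ τ - √(τ² - ‖x‖²)`. -/
theorem stmt_0 (D : ℕ) (hD : 0 < D) (M : Set (EuclideanSpace ℝ (Fin D)))
    (p : EuclideanSpace ℝ (Fin D)) (hp : p ∈ M)
    (T : Submodule ℝ (EuclideanSpace ℝ (Fin D))) (τ : ℝ) (hτ : 0 < τ)
    (hreach : ∀ ν ∈ Tᗮ, ‖ν‖ = 1 → Disjoint (Metric.ball (p + τ • ν) τ) M) :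
    ∀ x ∈ T, ∀ y ∈ Tᗮ, p + x + y ∈ M → ‖x‖ ≤ τ → ‖y‖ ≤ τ / 2 →
      ‖y‖ ≤ τ - Real.sqrt (τ ^ 2 - ‖x‖ ^ 2) := by
  intro x hx y hy hm hxτ hyτ
  rcases eq_or_ne y 0 with rfl | hy0
  · simp only [norm_zero]
    have h1 : Real.sqrt (τ ^ 2 - ‖x‖ ^ 2) ≤ Real.sqrt (τ ^ 2) := by
      apply Real.sqrt_le_sqrt; nlinarith [sq_nonneg ‖x‖]
    rw [Real.sqrt_sq hτ.le] at h1
    linarith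
  · have hny : 0 < ‖y‖ := norm_pos_iff.mpr hy0
    set ν : EuclideanSpace ℝ (Fin D) := ‖y‖⁻¹ • y with hν
    have hνT : ν ∈ Tᗮ := Submodule.smul_mem _ _ hy
    have hνn : ‖ν‖ = 1 := by
      rw [hν, norm_smul, norm_inv, norm_norm, inv_mul_cancel₀ hny.ne']
    have hdisj := hreach ν hνT hνn
    have hnot : p + x + y ∉ Metric.ball (p + τ • ν) τ :=
      fun h => (Set.disjoint_left.mp hdisj h) hm
    rw [Metric.mem_ball, not_lt, dist_eq_norm] at hnot
    have heq : p + x + y - (p + τ • ν) = x + (y - τ • ν) := by abel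
    rw [heq] at hnot
    have hperp : ⟪x, y - τ • ν⟫ = 0 := by
      have := (Submodule.sub_mem _ hy (Submodule.smul_mem _ τ hνT)) x hx
      exact this
    have hnorm2 : ‖x + (y - τ • ν)‖ ^ 2 = ‖x‖ ^ 2 + ‖y - τ • ν‖ ^ 2 := by
      rw [norm_add_sq_real, hperp]; ring
    have hyn : y - τ • ν = (1 - τ / ‖y‖) • y := by
      rw [sub_smul, one_smul, hν, smul_smul, div_eq_mul_inv]
    have hnormyn : ‖y - τ • ν‖ = τ - ‖y‖ := by
      rw [hyn, norm_smul, Real.norm_eq_abs]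
      have h2 : (1 : ℝ) ≤ τ / ‖y‖ := by
        rw [le_div_iff₀ hny]; linarith
      rw [abs_of_nonpos (by linarith)]
      field_simp
      ring
    have key : τ ^ 2 ≤ ‖x‖ ^ 2 + (τ - ‖y‖) ^ 2 := by
      rw [← hnormyn, ← hnorm2]
      have := hnot
      nlinarith [norm_nonneg (x + (y - τ • ν))]
    have hle : Real.sqrt (τ ^ 2 - ‖x‖ ^ 2) ≤ τ - ‖y‖ := by
      have := Real.sqrt_le_sqrt (show τ ^ 2 - ‖x‖ ^ 2 ≤ (τ - ‖y‖) ^ 2 by linarith)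
      rwa [Real.sqrt_sq (by linarith)] at this
    linarith
end

section
/- Let D be a positive integer, M ⊆ ℝ^D, p ∈ M, and let T and H be linear subspaces of ℝ^D of the same dimension d. Let τ > 0 and α ∈ [0, π/4]. Assume: (i) for every unit vector ν ∈ T^⊥ the open ball of radius τ centered at p + τ·ν is disjoint from M; (ii) for every unit vector u ∈ T, dist(u, H) ≤ sin α, and for every unit vector w ∈ H, dist(w, T) ≤ sin α. Then for every x ∈ H and y ∈ H^⊥ such that p + x + y ∈ M, ‖x‖ + τ·sin α ≤ τ, and ‖y‖ ≤ τ/2, one has ‖y‖ ≤ τ·cos α − √(τ² − (‖x‖ + τ·sin α)²ᐟ). -/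
open scoped RealInnerProductSpace

private lemma aux_inner_le {D : ℕ} (S : Submodule ℝ (EuclideanSpace ℝ (Fin D)))
    (y u : EuclideanSpace ℝ (Fin D)) (hy : y ∈ Sᗮ) (c : ℝ)
    (hc : Metric.infDist u (S : Set (EuclideanSpace ℝ (Fin D))) ≤ c) :
    |⟪y, u⟫| ≤ ‖y‖ * c := by
  refine le_of_forall_pos_le_add fun ε hε => ?_
  by_cases hy0 : y = 0
  · have h0 : (0:ℝ) ≤ c := le_trans Metric.infDist_nonneg hc
    simp only [hy0, inner_zero_left, abs_zero, norm_zero, zero_mul, zero_add]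
    linarith
  · have hny : 0 < ‖y‖ := norm_pos_iff.mpr hy0
    have hlt : Metric.infDist u (S : Set (EuclideanSpace ℝ (Fin D))) < c + ε / ‖y‖ := by
      have : 0 < ε / ‖y‖ := div_pos hε hny
      linarith
    obtain ⟨h, hhS, hdh⟩ := (Metric.infDist_lt_iff ⟨0, S.zero_mem⟩).mp hlt
    have hinner : ⟪y, u⟫ = ⟪y, u - h⟫ := by
      have h1 : ⟪h, y⟫ = 0 := (Submodule.mem_orthogonal S y).mp hy h hhS
      have h2 : ⟪y, h⟫ = 0 := by rw [real_inner_comm]; exact h1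
      rw [inner_sub_right, h2, sub_zero]
    calc |⟪y, u⟫| = |⟪y, u - h⟫| := by rw [hinner]
      _ ≤ ‖y‖ * ‖u - h‖ := abs_real_inner_le_norm y (u - h)
      _ = ‖y‖ * dist u h := by rw [dist_eq_norm]
      _ ≤ ‖y‖ * (c + ε / ‖y‖) := mul_le_mul_of_nonneg_left hdh.le hny.le
      _ = ‖y‖ * c + ε := by field_simp

/-- **Bounding Ball from a tilted plane (upper bound).** -/
theorem stmt_1 (D : ℕ) (hD : 0 < D) (M : Set (EuclideanSpace ℝ (Fin D)))
    (p : EuclideanSpace ℝ (Fin D)) (hp : p ∈ M)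
    (T H : Submodule ℝ (EuclideanSpace ℝ (Fin D))) (d : ℕ)
    (hdimT : Module.finrank ℝ T = d) (hdimH : Module.finrank ℝ H = d)
    (τ α : ℝ) (hτ : 0 < τ) (hα0 : 0 ≤ α) (hα : α ≤ Real.pi / 4)
    (hreach : ∀ ν ∈ Tᗮ, ‖ν‖ = 1 → Disjoint (Metric.ball (p + τ • ν) τ) M)
    (hTH : ∀ u ∈ T, ‖u‖ = 1 →
      Metric.infDist u (H : Set (EuclideanSpace ℝ (Fin D))) ≤ Real.sin α)
    (hHT : ∀ w ∈ H, ‖w‖ = 1 →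
      Metric.infDist w (T : Set (EuclideanSpace ℝ (Fin D))) ≤ Real.sin α) :
    ∀ x ∈ H, ∀ y ∈ Hᗮ, p + x + y ∈ M → ‖x‖ + τ * Real.sin α ≤ τ → ‖y‖ ≤ τ / 2 →
      ‖y‖ ≤ τ * Real.cos α - Real.sqrt (τ ^ 2 - (‖x‖ + τ * Real.sin α) ^ 2) := by
  intro x hx y hy hq hsτ hy2
  have hπ : 0 < Real.pi := Real.pi_pos
  -- trig bounds
  have hsin0 : 0 ≤ Real.sin α := Real.sin_nonneg_of_nonneg_of_le_pi hα0 (by linarith)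
  have hcosge : Real.sqrt 2 / 2 ≤ Real.cos α := by
    have := Real.cos_le_cos_of_nonneg_of_le_pi hα0 (by linarith : Real.pi / 4 ≤ Real.pi) hα
    rwa [Real.cos_pi_div_four] at this
  have hsqrt2 : (1:ℝ) < Real.sqrt 2 := by
    nlinarith only [Real.sq_sqrt (by norm_num : (2:ℝ) ≥ 0), Real.sqrt_nonneg 2]
  have hcoshalf : (1:ℝ)/2 < Real.cos α := by nlinarith only [hcosge, hsqrt2]
  have hcos0 : (0:ℝ) ≤ Real.cos α := by linarith
  have hpyth : Real.sin α ^ 2 + Real.cos α ^ 2 = 1 := Real.sin_sq_add_cos_sq α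
  have hsinlt : Real.sin α < 1 := by nlinarith only [hpyth, hcoshalf, hcos0, hsin0]
  set s : ℝ := ‖x‖ + τ * Real.sin α with hs
  have hs2 : s ^ 2 = ‖x‖ ^ 2 + 2 * τ * ‖x‖ * Real.sin α + τ ^ 2 * Real.sin α ^ 2 := by
    rw [hs]; ring
  have hs0 : 0 ≤ s := by positivity
  have hssin : τ * Real.sin α ≤ s := by
    rw [hs]; linarith [norm_nonneg x]
  have hτs2 : 0 ≤ τ ^ 2 - s ^ 2 := by nlinarith only [hs0, hsτ]
  have hsq : Real.sqrt (τ ^ 2 - s ^ 2) ^ 2 = τ ^ 2 - s ^ 2 := Real.sq_sqrt hτs2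
  have hsqnn : 0 ≤ Real.sqrt (τ ^ 2 - s ^ 2) := Real.sqrt_nonneg _
  have hpythτ : τ ^ 2 * Real.sin α ^ 2 + τ ^ 2 * Real.cos α ^ 2 = τ ^ 2 := by
    linear_combination τ ^ 2 * hpyth
  have hsqle : Real.sqrt (τ ^ 2 - s ^ 2) ≤ τ * Real.cos α := by
    have h1 : τ ^ 2 - s ^ 2 ≤ (τ * Real.cos α) ^ 2 := by
      nlinarith only [hpythτ, mul_le_mul hssin hssin (mul_nonneg hτ.le hsin0) hs0]
    calc Real.sqrt (τ ^ 2 - s ^ 2) ≤ Real.sqrt ((τ * Real.cos α) ^ 2) :=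
          Real.sqrt_le_sqrt h1
      _ = τ * Real.cos α := Real.sqrt_sq (by positivity)
  by_cases hy0 : y = 0
  · simp only [hy0, norm_zero]; linarith only [hsqle]
  have hny : 0 < ‖y‖ := norm_pos_iff.mpr hy0
  -- decompose y
  obtain ⟨w, hwT, z, hzT, hyz⟩ : ∃ w ∈ T, ∃ z ∈ Tᗮ, y = w + z :=
    ⟨T.orthogonalProjectionOnto y, (T.orthogonalProjectionOnto y).2,
      y - T.orthogonalProjectionOnto y, T.sub_starProjection_mem_orthogonal y, by abel⟩
  have hwz : ⟪w, z⟫ = 0 := (Submodule.mem_orthogonal T z).mp hzT w hwT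
  have hzw : ⟪z, w⟫ = 0 := by rw [real_inner_comm]; exact hwz
  have hpyty : ‖y‖ ^ 2 = ‖w‖ ^ 2 + ‖z‖ ^ 2 := by
    rw [hyz, norm_add_sq_real, hwz]; ring
  -- ‖w‖ ≤ ‖y‖ sin α
  have hwle : ‖w‖ ≤ ‖y‖ * Real.sin α := by
    by_cases hw0 : w = 0
    · simp only [hw0, norm_zero]; positivity
    · have hnw : 0 < ‖w‖ := norm_pos_iff.mpr hw0
      set u : EuclideanSpace ℝ (Fin D) := ‖w‖⁻¹ • w with hu
      have huT : u ∈ T := T.smul_mem _ hwT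
      have hun : ‖u‖ = 1 := by
        rw [hu, norm_smul, norm_inv, norm_norm, inv_mul_cancel₀ hnw.ne']
      have hiy : ⟪y, u⟫ = ‖w‖ := by
        rw [hu, real_inner_smul_right, hyz, inner_add_left, hzw, add_zero,
          real_inner_self_eq_norm_sq, pow_two, inv_mul_cancel_left₀ hnw.ne']
      have hb := aux_inner_le H y u hy (Real.sin α) (hTH u huT hun)
      rw [hiy] at hb
      calc ‖w‖ ≤ |‖w‖| := le_abs_self _
        _ ≤ ‖y‖ * Real.sin α := hb
  have hw2 : ‖w‖ ^ 2 ≤ (‖y‖ * Real.sin α) ^ 2 :=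
    pow_le_pow_left₀ (norm_nonneg w) hwle 2
  have hpythy : ‖y‖ ^ 2 * Real.sin α ^ 2 + ‖y‖ ^ 2 * Real.cos α ^ 2 = ‖y‖ ^ 2 := by
    linear_combination ‖y‖ ^ 2 * hpyth
  have hA : (‖y‖ * Real.cos α) ^ 2 ≤ ‖z‖ ^ 2 := by nlinarith only [hpyty, hw2, hpythy]
  have hzlb : ‖y‖ * Real.cos α ≤ ‖z‖ := by
    nlinarith only [hA, norm_nonneg z, mul_nonneg (norm_nonneg y) hcos0]
  have hnz : 0 < ‖z‖ := by nlinarith only [hzlb, hny, hcoshalf]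
  -- the unit normal
  set ν : EuclideanSpace ℝ (Fin D) := ‖z‖⁻¹ • z with hν
  have hνT : ν ∈ Tᗮ := Submodule.smul_mem _ _ hzT
  have hνn : ‖ν‖ = 1 := by
    rw [hν, norm_smul, norm_inv, norm_norm, inv_mul_cancel₀ hnz.ne']
  have hyν : ⟪y, ν⟫ = ‖z‖ := by
    rw [hν, real_inner_smul_right, hyz, inner_add_left, hwz, zero_add,
      real_inner_self_eq_norm_sq, pow_two, inv_mul_cancel_left₀ hnz.ne']
  -- |⟪x, ν⟫| ≤ ‖x‖ sin α
  have hxν : |⟪x, ν⟫| ≤ ‖x‖ * Real.sin α := by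
    by_cases hx0 : x = 0
    · simp [hx0]
    · have hnx : 0 < ‖x‖ := norm_pos_iff.mpr hx0
      set u : EuclideanSpace ℝ (Fin D) := ‖x‖⁻¹ • x with hu
      have huH : u ∈ H := H.smul_mem _ hx
      have hun : ‖u‖ = 1 := by
        rw [hu, norm_smul, norm_inv, norm_norm, inv_mul_cancel₀ hnx.ne']
      have hb := aux_inner_le T ν u hνT (Real.sin α) (hHT u huH hun)
      rw [hνn, one_mul] at hb
      have hxu : ⟪ν, u⟫ = ‖x‖⁻¹ * ⟪x, ν⟫ := by
        rw [hu, real_inner_smul_right, real_inner_comm]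
      have habs : |⟪x, ν⟫| = ‖x‖ * |⟪ν, u⟫| := by
        rw [hxu, abs_mul, abs_inv, abs_norm, ← mul_assoc, mul_inv_cancel₀ hnx.ne', one_mul]
      rw [habs]
      exact mul_le_mul_of_nonneg_left hb hnx.le
  -- the reach inequality
  have hdisj := hreach ν hνT hνn
  have hnotball : p + x + y ∉ Metric.ball (p + τ • ν) τ := fun hmem =>
    (Set.disjoint_left.mp hdisj hmem) hq
  have hdist : τ ≤ ‖x + y - τ • ν‖ := by
    have hnd : ¬ dist (p + x + y) (p + τ • ν) < τ := fun hlt =>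
      hnotball (Metric.mem_ball.mpr hlt)
    push_neg at hnd
    rw [dist_eq_norm] at hnd
    have heq : p + x + y - (p + τ • ν) = x + y - τ • ν := by abel
    rwa [heq] at hnd
  have hxy0 : ⟪x, y⟫ = 0 := (Submodule.mem_orthogonal H y).mp hy x hx
  have hexp : ‖x + y - τ • ν‖ ^ 2 =
      ‖x‖ ^ 2 + ‖y‖ ^ 2 + τ ^ 2 - 2 * τ * ⟪x, ν⟫ - 2 * τ * ⟪y, ν⟫ := by
    have e1 : ⟪x, τ • ν⟫ = τ * ⟪x, ν⟫ := real_inner_smul_right x ν τ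
    have e2 : ⟪y, τ • ν⟫ = τ * ⟪y, ν⟫ := real_inner_smul_right y ν τ
    rw [norm_sub_sq_real, norm_add_sq_real, hxy0, inner_add_left, e1, e2, norm_smul,
      Real.norm_eq_abs, abs_of_pos hτ, mul_pow, hνn]
    ring
  have h1 : τ ^ 2 ≤ ‖x + y - τ • ν‖ ^ 2 := by
    nlinarith only [hdist, hτ, norm_nonneg (x + y - τ • ν)]
  rw [hexp] at h1
  have h2 : -(‖x‖ * Real.sin α) ≤ ⟪x, ν⟫ := by
    have := abs_le.mp hxν; linarith [this.1]
  have h3 : ‖y‖ * Real.cos α ≤ ⟪y, ν⟫ := by rw [hyν]; exact hzlb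
  have h2' := mul_le_mul_of_nonneg_left h2 hτ.le
  have h3' := mul_le_mul_of_nonneg_left h3 hτ.le
  have hkey : 2 * τ * (‖y‖ * Real.cos α) ≤ ‖x‖ ^ 2 + ‖y‖ ^ 2 + 2 * τ * (‖x‖ * Real.sin α) := by
    linarith only [h1, h2', h3']
  -- finish
  have hfpos : 0 < τ * Real.cos α - ‖y‖ := by nlinarith only [hcoshalf, hτ, hy2]
  have h4 : Real.sqrt (τ ^ 2 - s ^ 2) ^ 2 ≤ (τ * Real.cos α - ‖y‖) ^ 2 := by
    linarith only [hkey, hsq, hpythτ, hs2]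
  have h5 : Real.sqrt (τ ^ 2 - s ^ 2) ≤ τ * Real.cos α - ‖y‖ := by
    nlinarith only [h4, hsqnn, hfpos]
  linarith only [h5]
end

section
/- There exists a constant c > 0 such that the following holds. Let D be a positive integer, M ⊆ ℝ^D, p ∈ M, and let T and H be linear subspaces of ℝ^D of the same dimension d. Let τ > 0 and α ∈ [0, π/4]. Assume: (i) for every unit vector ν ∈ T^⊥ the open ball of radius τ centered at p + τ·ν is disjoint from M; (ii) for every unit vector u ∈ T, dist(u, H) ≤ sin α, and for every unit vector w ∈ H, dist(w, T) ≤ sin α. Then for every x ∈ H and y ∈ H^⊥ such that p + x + y ∈ M, ‖x‖ ≤ τ/8, and ‖y‖ ≤ τ/2, one has ‖y‖ ≤ ‖x‖·(tan α + c·‖x‖/τ). -/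
open scoped RealInnerProductSpace

set_option maxHeartbeats 1000000

section Aux

variable {E : Type*} [NormedAddCommGroup E] [InnerProductSpace ℝ E] [FiniteDimensional ℝ E]

private lemma aux_contract (K : Submodule ℝ E) (v : E) :
    ‖(Submodule.orthogonalProjection K v : E)‖ ≤ ‖v‖ := by
  calc ‖(Submodule.orthogonalProjection K v : E)‖ ≤ ‖Submodule.orthogonalProjection K‖ * ‖v‖ :=
        (Submodule.orthogonalProjection K).le_opNorm v
    _ ≤ 1 * ‖v‖ := by gcongr; exact Submodule.orthogonalProjectionOnto_norm_le K
    _ = ‖v‖ := one_mul _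

private lemma aux_proj_zero (K : Submodule ℝ E) {v : E} (hv : v ∈ K) :
    Submodule.orthogonalProjection Kᗮ v = 0 :=
  Submodule.orthogonalProjectionOnto_apply_of_mem_orthogonal (K.le_orthogonal_orthogonal hv)

/-- The norm of the projection onto `Kᗮ` is at most the distance to `K`. -/
private lemma aux_infDist (K : Submodule ℝ E) (v : E) :
    ‖(Submodule.orthogonalProjection Kᗮ v : E)‖ ≤ Metric.infDist v (K : Set E) := by
  by_contra hlt
  push_neg at hlt
  obtain ⟨w, hwK, hw⟩ := (Metric.infDist_lt_iff ⟨0, K.zero_mem⟩).1 hlt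
  have h1 : ‖(Submodule.orthogonalProjection Kᗮ (v - w) : E)‖ ≤ ‖v - w‖ := aux_contract _ _
  rw [map_sub, aux_proj_zero K hwK, sub_zero] at h1
  rw [dist_eq_norm] at hw
  exact absurd (h1.trans_lt hw) (lt_irrefl _)

private lemma aux_inner_proj (K : Submodule ℝ E) (v : E) :
    ⟪v, (Submodule.orthogonalProjection K v : E)⟫ = ‖(Submodule.orthogonalProjection K v : E)‖ ^ 2 := by
  have h := Submodule.sub_starProjection_mem_orthogonal (K := K) v
  have h0 : ⟪(Submodule.orthogonalProjection K v : E), v - Submodule.orthogonalProjection K v⟫ = 0 :=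
    h _ (Submodule.orthogonalProjection K v).2
  rw [inner_sub_right] at h0
  rw [← real_inner_self_eq_norm_sq, real_inner_comm]
  linarith

end Aux

/-- **Simplified tilted-plane bound.** There exists a universal constant `c > 0` such that,
under the reach and principal-angle hypotheses, `‖y‖ ≤ ‖x‖·(tan α + c‖x‖/τ)`. -/
theorem stmt_2 : ∃ c : ℝ, 0 < c ∧
    ∀ (D : ℕ), 0 < D →
    ∀ (M : Set (EuclideanSpace ℝ (Fin D))) (p : EuclideanSpace ℝ (Fin D)), p ∈ M →
    ∀ (T H : Submodule ℝ (EuclideanSpace ℝ (Fin D))) (d : ℕ),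
      Module.finrank ℝ T = d → Module.finrank ℝ H = d →
    ∀ (τ α : ℝ), 0 < τ → 0 ≤ α → α ≤ Real.pi / 4 →
    (∀ ν ∈ Tᗮ, ‖ν‖ = 1 → Disjoint (Metric.ball (p + τ • ν) τ) M) →
    (∀ u ∈ T, ‖u‖ = 1 →
      Metric.infDist u (H : Set (EuclideanSpace ℝ (Fin D))) ≤ Real.sin α) →
    (∀ w ∈ H, ‖w‖ = 1 →
      Metric.infDist w (T : Set (EuclideanSpace ℝ (Fin D))) ≤ Real.sin α) →
    ∀ x ∈ H, ∀ y ∈ Hᗮ, p + x + y ∈ M → ‖x‖ ≤ τ / 8 → ‖y‖ ≤ τ / 2 →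
      ‖y‖ ≤ ‖x‖ * (Real.tan α + c * ‖x‖ / τ) := by
  refine ⟨5, by norm_num, ?_⟩
  intro D _hD M p hpM T H d _hT _hH τ α hτ hα0 hα4 hreach hTH hHT x hxH y hyH hq hxτ hyτ
  let E := EuclideanSpace ℝ (Fin D)
  set v : EuclideanSpace ℝ (Fin D) := x + y with hv
  -- Step 1: reach condition gives a bound on the T⊥-component of v = x + y
  have hPv : ‖(Submodule.orthogonalProjection Tᗮ v : E)‖ ≤ ‖v‖ ^ 2 / (2 * τ) := by
    set w : E := (Submodule.orthogonalProjection Tᗮ v : E) with hw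
    rcases eq_or_ne w 0 with h0 | h0
    · rw [h0, norm_zero]; positivity
    · have hwn : (0:ℝ) < ‖w‖ := norm_pos_iff.2 h0
      set ν : E := ‖w‖⁻¹ • w with hν
      have hνT : ν ∈ Tᗮ := Tᗮ.smul_mem _ (Submodule.orthogonalProjection Tᗮ v).2
      have hν1 : ‖ν‖ = 1 := by
        rw [hν, norm_smul, norm_inv, norm_norm, inv_mul_cancel₀ hwn.ne']
      have hdisj := hreach ν hνT hν1
      -- p + x + y ∉ ball (p + τ • ν) τ
      have hnot : p + x + y ∉ Metric.ball (p + τ • ν) τ := fun hb =>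
        Set.disjoint_left.1 hdisj hb hq
      rw [Metric.mem_ball, dist_eq_norm] at hnot
      push_neg at hnot
      have hsub : p + x + y - (p + τ • ν) = v - τ • ν := by rw [hv]; abel
      rw [hsub] at hnot
      have hip : ⟪v, w⟫ = ‖w‖ ^ 2 := by rw [hw]; exact aux_inner_proj _ _
      have hinner : ⟪v, ν⟫ = ‖w‖ := by
        rw [hν, real_inner_smul_right, hip, sq]
        field_simp
      have hexp : ‖v - τ • ν‖ ^ 2 = ‖v‖ ^ 2 - 2 * τ * ‖w‖ + τ ^ 2 := by
        rw [norm_sub_sq_real, real_inner_smul_right, hinner, norm_smul,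
          Real.norm_eq_abs, abs_of_pos hτ, hν1]
        ring
      have hsq : τ ^ 2 ≤ ‖v - τ • ν‖ ^ 2 := by
        have := pow_le_pow_left₀ hτ.le hnot 2
        linarith [this]
      rw [hexp] at hsq
      rw [le_div_iff₀ (by linarith)]
      linarith
  -- Step 2: angle conditions
  have hsin0 : 0 ≤ Real.sin α := Real.sin_nonneg_of_nonneg_of_le_pi hα0
    (by linarith [Real.pi_pos])
  -- ‖P_{T⊥} x‖ ≤ ‖x‖ sin α
  have hPx : ‖(Submodule.orthogonalProjection Tᗮ x : E)‖ ≤ ‖x‖ * Real.sin α := by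
    rcases eq_or_ne x 0 with h0 | h0
    · simp [h0]
    · have hxn : (0:ℝ) < ‖x‖ := norm_pos_iff.2 h0
      set u : E := ‖x‖⁻¹ • x with hu
      have huH : u ∈ H := H.smul_mem _ hxH
      have hu1 : ‖u‖ = 1 := by
        rw [hu, norm_smul, norm_inv, norm_norm, inv_mul_cancel₀ hxn.ne']
      have h1 : ‖(Submodule.orthogonalProjection Tᗮ u : E)‖ ≤ Real.sin α :=
        (aux_infDist T u).trans (hHT u huH hu1)
      have h2 : (Submodule.orthogonalProjection Tᗮ x : E) = ‖x‖ • (Submodule.orthogonalProjection Tᗮ u : E) := by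
        rw [hu, map_smul]
        push_cast
        rw [smul_smul, mul_inv_cancel₀ hxn.ne', one_smul]
      rw [h2, norm_smul, norm_norm]
      exact mul_le_mul_of_nonneg_left h1 hxn.le
  -- ‖P_T y‖ ≤ ‖y‖ sin α
  have hPy : ‖(Submodule.orthogonalProjection T y : E)‖ ≤ ‖y‖ * Real.sin α := by
    set z : E := (Submodule.orthogonalProjection T y : E) with hz
    rcases eq_or_ne z 0 with h0 | h0
    · rw [h0, norm_zero]; positivity
    · have hzn : (0:ℝ) < ‖z‖ := norm_pos_iff.2 h0
      set u : E := ‖z‖⁻¹ • z with hu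
      have huT : u ∈ T := T.smul_mem _ (Submodule.orthogonalProjection T y).2
      have hu1 : ‖u‖ = 1 := by
        rw [hu, norm_smul, norm_inv, norm_norm, inv_mul_cancel₀ hzn.ne']
      have h1 : ‖(Submodule.orthogonalProjection Hᗮ u : E)‖ ≤ Real.sin α :=
        (aux_infDist H u).trans (hTH u huT hu1)
      -- ⟪y, u⟫ = ‖z‖
      have hip : ⟪y, z⟫ = ‖z‖ ^ 2 := by rw [hz]; exact aux_inner_proj _ _
      have hinner : ⟪y, u⟫ = ‖z‖ := by
        rw [hu, real_inner_smul_right, hip, sq]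
        field_simp
      -- ⟪y, u⟫ = ⟪y, P_{H⊥} u⟫ since y ∈ H⊥ and u - P_{H⊥} u... use decomposition
      have hdec : (Submodule.orthogonalProjection H u : E) + (Submodule.orthogonalProjection Hᗮ u : E) = u :=
        Submodule.starProjection_add_starProjection_orthogonal (K := H) u
      have hy0 : ⟪y, (Submodule.orthogonalProjection H u : E)⟫ = 0 := by
        rw [real_inner_comm]
        exact hyH _ (Submodule.orthogonalProjection H u).2
      have h2 : ⟪y, u⟫ = ⟪y, (Submodule.orthogonalProjection Hᗮ u : E)⟫ := by
        conv_lhs => rw [← hdec]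
        rw [inner_add_right, hy0, zero_add]
      have h3 : ⟪y, (Submodule.orthogonalProjection Hᗮ u : E)⟫ ≤ ‖y‖ * Real.sin α := by
        calc ⟪y, (Submodule.orthogonalProjection Hᗮ u : E)⟫
            ≤ ‖y‖ * ‖(Submodule.orthogonalProjection Hᗮ u : E)‖ := real_inner_le_norm _ _
          _ ≤ ‖y‖ * Real.sin α := by
              exact mul_le_mul_of_nonneg_left h1 (norm_nonneg _)
      rw [← hinner, h2]
      exact h3
  -- Step 3: ‖y‖ cos α ≤ ‖P_{T⊥} y‖
  have hcos : Real.cos α > 0 := Real.cos_pos_of_mem_Ioo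
    ⟨by linarith [Real.pi_pos], by linarith [Real.pi_pos, Real.pi_gt_three]⟩
  have hPyorth : ‖y‖ * Real.cos α ≤ ‖(Submodule.orthogonalProjection Tᗮ y : E)‖ := by
    have hdec : (Submodule.orthogonalProjection T y : E) + (Submodule.orthogonalProjection Tᗮ y : E) = y :=
      Submodule.starProjection_add_starProjection_orthogonal (K := T) y
    have horth : ⟪(Submodule.orthogonalProjection T y : E), (Submodule.orthogonalProjection Tᗮ y : E)⟫ = 0 :=
      (Submodule.orthogonalProjection Tᗮ y).2 _ (Submodule.orthogonalProjection T y).2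
    have hpyth : ‖y‖ ^ 2 = ‖(Submodule.orthogonalProjection T y : E)‖ ^ 2
        + ‖(Submodule.orthogonalProjection Tᗮ y : E)‖ ^ 2 := by
      conv_lhs => rw [← hdec]
      rw [norm_add_sq_real, horth]
      ring
    have hs2 : Real.sin α ^ 2 + Real.cos α ^ 2 = 1 := Real.sin_sq_add_cos_sq α
    nlinarith [hPy, norm_nonneg y, norm_nonneg (Submodule.orthogonalProjection Tᗮ y : E),
      norm_nonneg (Submodule.orthogonalProjection T y : E), mul_le_mul hPy hPy
        (norm_nonneg _) (by positivity)]
  -- Step 4: combine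
  have htri : ‖(Submodule.orthogonalProjection Tᗮ y : E)‖ ≤
      ‖(Submodule.orthogonalProjection Tᗮ v : E)‖ + ‖(Submodule.orthogonalProjection Tᗮ x : E)‖ := by
    have : (Submodule.orthogonalProjection Tᗮ y : E) =
        (Submodule.orthogonalProjection Tᗮ v : E) - (Submodule.orthogonalProjection Tᗮ x : E) := by
      rw [hv, map_add]; push_cast; abel
    rw [this]
    exact norm_sub_le _ _
  have hxy : ‖v‖ ^ 2 = ‖x‖ ^ 2 + ‖y‖ ^ 2 := by
    rw [hv, norm_add_sq_real, hyH _ hxH]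
    ring
  set a := ‖x‖ with ha
  set b := ‖y‖ with hb
  have ha0 : 0 ≤ a := norm_nonneg _
  have hb0 : 0 ≤ b := norm_nonneg _
  have hmain : b * Real.cos α ≤ (a ^ 2 + b ^ 2) / (2 * τ) + a * Real.sin α := by
    calc b * Real.cos α ≤ ‖(Submodule.orthogonalProjection Tᗮ y : E)‖ := hPyorth
      _ ≤ ‖(Submodule.orthogonalProjection Tᗮ v : E)‖ + ‖(Submodule.orthogonalProjection Tᗮ x : E)‖ := htri
      _ ≤ ‖v‖ ^ 2 / (2 * τ) + a * Real.sin α := add_le_add hPv hPx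
      _ = (a ^ 2 + b ^ 2) / (2 * τ) + a * Real.sin α := by rw [hxy]
  -- arithmetic
  have h2τ : (0:ℝ) < 2 * τ := by linarith
  have hmain' : b * Real.cos α * (2 * τ) ≤ (a ^ 2 + b ^ 2) + a * Real.sin α * (2 * τ) := by
    have := mul_le_mul_of_nonneg_right hmain h2τ.le
    rw [add_mul, div_mul_cancel₀ _ h2τ.ne'] at this
    linarith
  have hsqrt2 : (1.414 : ℝ) ≤ Real.sqrt 2 := by
    nlinarith [Real.sq_sqrt (by norm_num : (2:ℝ) ≥ 0), Real.sqrt_nonneg 2]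
  have hcosge : Real.sqrt 2 / 2 ≤ Real.cos α := by
    rw [← Real.cos_pi_div_four]
    exact Real.cos_le_cos_of_nonneg_of_le_pi hα0 (by linarith [Real.pi_gt_three]) hα4
  have hsin1 : Real.sin α ≤ 1 := Real.sin_le_one α
  -- crude bound b ≤ 12/5 a
  have hba : b ≤ 12 / 5 * a := by
    nlinarith [mul_nonneg hb0 (sub_nonneg.2 hyτ), mul_nonneg ha0 (sub_nonneg.2 hxτ),
      mul_nonneg (mul_nonneg hb0 hτ.le) (sub_nonneg.2 hcosge)]
  -- final
  have hkey : b * (Real.cos α * τ) ≤ a * Real.sin α * τ + 5 * a ^ 2 * Real.cos α := by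
    nlinarith [mul_le_mul hba hba hb0 (by positivity : (0:ℝ) ≤ 12 / 5 * a),
      mul_nonneg (mul_nonneg ha0 ha0) (sub_nonneg.2 hcosge)]
  have hgoal : a * (Real.tan α + 5 * a / τ) = (a * Real.sin α * τ + 5 * a ^ 2 * Real.cos α)
      / (Real.cos α * τ) := by
    rw [Real.tan_eq_sin_div_cos]
    field_simp
  rw [hgoal, le_div_iff₀ (by positivity)]
  exact hkey
end

section
/- Let F and G be linear subspaces of ℝ^D of the same dimension d, and let α ∈ [0, π/2]. Assume that for every unit vector u ∈ F, dist(u, G) ≤ sin α, and for every unit vector w ∈ G, dist(w, F) ≤ sin α. Then for every nonzero vector v ∈ F^⊥ there exists a nonzero vector w ∈ G^⊥ such that ⟨v, w⟩ ≥ cos α · ‖v‖ · ‖w‖ (equivalently, the angle between v and w is at most α). -/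
open scoped RealInnerProductSpace

/-- If the maximal principal angle between `F` and `G` (subspaces of the same dimension)
is at most `α`, then every nonzero `v ∈ Fᗮ` makes an angle at most `α` with some nonzero
`w ∈ Gᗮ`. -/
theorem stmt_3 (D : ℕ) (F G : Submodule ℝ (EuclideanSpace ℝ (Fin D))) (d : ℕ)
    (hdimF : Module.finrank ℝ F = d) (hdimG : Module.finrank ℝ G = d)
    (α : ℝ) (hα0 : 0 ≤ α) (hα : α ≤ Real.pi / 2)
    (hFG : ∀ u ∈ F, ‖u‖ = 1 →
      Metric.infDist u (G : Set (EuclideanSpace ℝ (Fin D))) ≤ Real.sin α)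
    (hGF : ∀ w ∈ G, ‖w‖ = 1 →
      Metric.infDist w (F : Set (EuclideanSpace ℝ (Fin D))) ≤ Real.sin α) :
    ∀ v ∈ Fᗮ, v ≠ 0 → ∃ w ∈ Gᗮ, w ≠ 0 ∧
      Real.cos α * ‖v‖ * ‖w‖ ≤ ⟪v, w⟫ := by
  intro v hv hv0
  have hsin0 : 0 ≤ Real.sin α :=
    Real.sin_nonneg_of_nonneg_of_le_pi hα0 (hα.trans (by linarith [Real.pi_pos]))
  have hcos0 : 0 ≤ Real.cos α := Real.cos_nonneg_of_mem_Icc ⟨by linarith [Real.pi_pos], hα⟩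
  have hFne : (F : Set (EuclideanSpace ℝ (Fin D))).Nonempty := ⟨0, F.zero_mem⟩
  -- key inner bound: for x ∈ G, ⟪v, x⟫ ≤ sin α * ‖v‖ * ‖x‖
  have key : ∀ x ∈ G, ⟪v, x⟫ ≤ Real.sin α * ‖v‖ * ‖x‖ := by
    intro x hx
    rcases eq_or_ne x 0 with rfl | hx0
    · simp
    · set u : EuclideanSpace ℝ (Fin D) := ‖x‖⁻¹ • x with hu
      have hxn : (0:ℝ) < ‖x‖ := norm_pos_iff.mpr hx0
      have hun : ‖u‖ = 1 := by
        rw [hu, norm_smul, norm_inv, norm_norm, inv_mul_cancel₀ hxn.ne']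
      have huG : u ∈ G := G.smul_mem _ hx
      have hd := hGF u huG hun
      have hproj : ‖u - Submodule.orthogonalProjectionOnto F u‖ ≤ Real.sin α := by
        refine le_trans ?_ hd
        rw [Metric.infDist_eq_iInf]
        refine le_ciInf fun y => ?_
        rw [dist_eq_norm, ← Submodule.starProjection_apply, Submodule.starProjection_minimal]
        exact ciInf_le_of_le ⟨0, fun b ⟨z, hz⟩ => hz ▸ norm_nonneg _⟩ ⟨(y : EuclideanSpace ℝ (Fin D)), y.2⟩ le_rfl
      have hvu : ⟪v, u⟫ ≤ Real.sin α * ‖v‖ := by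
        have h1 : ⟪v, (Submodule.orthogonalProjectionOnto F u : EuclideanSpace ℝ (Fin D))⟫ = 0 := by
          rw [real_inner_comm]; exact hv _ (Submodule.orthogonalProjectionOnto F u).2
        have h2 : ⟪v, u⟫ = ⟪v, u - Submodule.orthogonalProjectionOnto F u⟫ := by
          rw [inner_sub_right, h1, sub_zero]
        calc ⟪v, u⟫ = ⟪v, u - Submodule.orthogonalProjectionOnto F u⟫ := h2
          _ ≤ ‖v‖ * ‖u - Submodule.orthogonalProjectionOnto F u‖ := real_inner_le_norm _ _
          _ ≤ ‖v‖ * Real.sin α := by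
              exact mul_le_mul_of_nonneg_left hproj (norm_nonneg _)
          _ = Real.sin α * ‖v‖ := mul_comm _ _
      have : ⟪v, x⟫ = ‖x‖ * ⟪v, u⟫ := by
        rw [hu, real_inner_smul_right]
        field_simp
      rw [this]
      calc ‖x‖ * ⟪v, u⟫ ≤ ‖x‖ * (Real.sin α * ‖v‖) :=
            mul_le_mul_of_nonneg_left hvu hxn.le
        _ = Real.sin α * ‖v‖ * ‖x‖ := by ring
  set g : EuclideanSpace ℝ (Fin D) := (Submodule.orthogonalProjectionOnto G v : EuclideanSpace ℝ (Fin D)) with hgdef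
  set w : EuclideanSpace ℝ (Fin D) := v - g with hwdef
  have hwG : w ∈ Gᗮ := by
    rw [hwdef, hgdef]; exact Submodule.sub_starProjection_mem_orthogonal v
  have hgG : g ∈ G := by rw [hgdef]; exact (Submodule.orthogonalProjectionOnto G v).2
  clear_value g w
  have hgw : ⟪g, w⟫ = 0 := hwG g hgG
  have hwg : ⟪w, g⟫ = 0 := by rw [real_inner_comm]; exact hgw
  have hvw : ⟪v, w⟫ = ‖w‖ ^ 2 := by
    have : v = w + g := by rw [hwdef]; abel
    rw [this, inner_add_left, real_inner_self_eq_norm_sq, hgw, add_zero]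
  have hpyth : ‖v‖ ^ 2 = ‖w‖ ^ 2 + ‖g‖ ^ 2 := by
    have hv' : v = w + g := by rw [hwdef]; abel
    rw [hv', norm_add_sq_real, hwg, mul_zero]
    ring
  have hg_le : ‖g‖ ≤ Real.sin α * ‖v‖ := by
    have h1 : ⟪v, g⟫ = ‖g‖ ^ 2 := by
      have : v = w + g := by rw [hwdef]; abel
      rw [this, inner_add_left, hwg, real_inner_self_eq_norm_sq, zero_add]
    have h2 := key g hgG
    rw [h1] at h2
    rcases eq_or_ne g 0 with h | h
    · simp [h]; positivity
    · have hgn : (0:ℝ) < ‖g‖ := norm_pos_iff.mpr h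
      nlinarith
  rcases eq_or_ne w 0 with hw0 | hw0
  · -- degenerate: v ∈ G, forces sin α = 1, cos α = 0
    have hvG : v ∈ G := by
      have : v = g := by rw [hwdef] at hw0; linear_combination (norm := module) hw0
      rw [this]; exact hgG
    have hvn : (0:ℝ) < ‖v‖ := norm_pos_iff.mpr hv0
    have hsin1 : 1 ≤ Real.sin α := by
      have := hg_le
      have hgv : ‖g‖ = ‖v‖ := by
        rw [hwdef] at hw0
        have : v = g := by linear_combination (norm := module) hw0
        rw [this]
      rw [hgv] at this
      nlinarith
    have hcos : Real.cos α = 0 := by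
      have h := Real.sin_sq_add_cos_sq α
      have hs1 : Real.sin α = 1 := le_antisymm (Real.sin_le_one α) hsin1
      nlinarith
    -- Gᗮ is nontrivial since Fᗮ is
    have hrank : Module.finrank ℝ Gᗮ = Module.finrank ℝ Fᗮ := by
      have h1 := Submodule.finrank_add_finrank_orthogonal (K := F)
      have h2 := Submodule.finrank_add_finrank_orthogonal (K := G)
      omega
    have hFbot : Fᗮ ≠ ⊥ := fun h => hv0 (by simpa [h] using hv)
    have hFpos : 0 < Module.finrank ℝ Fᗮ := by
      rcases Nat.eq_zero_or_pos (Module.finrank ℝ Fᗮ) with h | h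
      · exact absurd (Submodule.finrank_eq_zero.mp h) hFbot
      · exact h
    have hGbot : Gᗮ ≠ ⊥ := by
      intro h
      rw [h] at hrank
      rw [finrank_bot] at hrank
      omega
    obtain ⟨w', hw'G, hw'0⟩ := Submodule.exists_mem_ne_zero_of_ne_bot hGbot
    refine ⟨w', hw'G, hw'0, ?_⟩
    rw [hcos]
    have : ⟪v, w'⟫ = 0 := hw'G v hvG
    rw [this]; ring_nf; simp
  · refine ⟨w, hwG, hw0, ?_⟩
    have hg2 : ‖g‖ ^ 2 ≤ Real.sin α ^ 2 * ‖v‖ ^ 2 := by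
      have := pow_le_pow_left₀ (norm_nonneg g) hg_le 2
      calc ‖g‖ ^ 2 ≤ (Real.sin α * ‖v‖) ^ 2 := this
        _ = Real.sin α ^ 2 * ‖v‖ ^ 2 := by ring
    have hid : Real.cos α ^ 2 * ‖v‖ ^ 2 = ‖v‖ ^ 2 - Real.sin α ^ 2 * ‖v‖ ^ 2 := by
      have h := Real.sin_sq_add_cos_sq α
      linear_combination ‖v‖ ^ 2 * h
    have hsq : (Real.cos α * ‖v‖) ^ 2 ≤ ‖w‖ ^ 2 := by
      have : (Real.cos α * ‖v‖) ^ 2 = Real.cos α ^ 2 * ‖v‖ ^ 2 := by ring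
      rw [this, hid]
      linarith [hpyth, hg2]
    have hcw : Real.cos α * ‖v‖ ≤ ‖w‖ := by
      calc Real.cos α * ‖v‖ = Real.sqrt ((Real.cos α * ‖v‖) ^ 2) :=
            (Real.sqrt_sq (mul_nonneg hcos0 (norm_nonneg v))).symm
        _ ≤ Real.sqrt (‖w‖ ^ 2) := Real.sqrt_le_sqrt hsq
        _ = ‖w‖ := Real.sqrt_sq (norm_nonneg w)
    rw [hvw]
    calc Real.cos α * ‖v‖ * ‖w‖ ≤ ‖w‖ * ‖w‖ :=
          mul_le_mul_of_nonneg_right hcw (norm_nonneg _)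
      _ = ‖w‖ ^ 2 := by ring
end

section
/- Let F and G be linear subspaces of ℝ^D of the same dimension d, and let α ∈ [0, π/2]. Assume that for every unit vector u ∈ F, dist(u, G) ≤ sin α, and for every unit vector w ∈ G, dist(w, F) ≤ sin α. Then for every v ∈ F^⊥ and every w ∈ G, |⟨v, w⟩| ≤ sin α · ‖v‖ · ‖w‖ (equivalently, the angle between v and w is at least π/2 − α). -/
open scoped RealInnerProductSpace

/-- If the maximal principal angle between `F` and `G` (subspaces of the same dimension)
is at most `α`, then every `v ∈ Fᗮ` and `w ∈ G` satisfy `|⟨v,w⟩| ≤ sin α ‖v‖ ‖w‖`,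
i.e. the angle between them is at least `π/2 − α`. -/
theorem stmt_4 (D : ℕ) (F G : Submodule ℝ (EuclideanSpace ℝ (Fin D))) (d : ℕ)
    (hdimF : Module.finrank ℝ F = d) (hdimG : Module.finrank ℝ G = d)
    (α : ℝ) (hα0 : 0 ≤ α) (hα : α ≤ Real.pi / 2)
    (hFG : ∀ u ∈ F, ‖u‖ = 1 →
      Metric.infDist u (G : Set (EuclideanSpace ℝ (Fin D))) ≤ Real.sin α)
    (hGF : ∀ w ∈ G, ‖w‖ = 1 →
      Metric.infDist w (F : Set (EuclideanSpace ℝ (Fin D))) ≤ Real.sin α) :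
    ∀ v ∈ Fᗮ, ∀ w ∈ G, |⟪v, w⟫| ≤ Real.sin α * ‖v‖ * ‖w‖ := by
  intro v hv w hw
  rcases eq_or_ne w 0 with rfl | hw0
  · simp
  -- normalize w
  set u : EuclideanSpace ℝ (Fin D) := ‖w‖⁻¹ • w with hu_def
  have hwpos : (0:ℝ) < ‖w‖ := norm_pos_iff.mpr hw0
  have huG : u ∈ G := G.smul_mem _ hw
  have hu1 : ‖u‖ = 1 := by
    rw [hu_def, norm_smul, norm_inv, norm_norm, inv_mul_cancel₀ hwpos.ne']
  have hinf := hGF u huG hu1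
  set p : EuclideanSpace ℝ (Fin D) := (F.orthogonalProjectionOnto u : EuclideanSpace ℝ (Fin D))
    with hp_def
  have hpmin : ‖u - p‖ ≤ Metric.infDist u (F : Set (EuclideanSpace ℝ (Fin D))) := by
    rw [Metric.infDist_eq_iInf, hp_def, ← Submodule.starProjection_apply, Submodule.starProjection_minimal]
    simp_rw [dist_eq_norm]; exact le_rfl
  have hup : ‖u - p‖ ≤ Real.sin α := hpmin.trans hinf
  have hvp : ⟪v, p⟫ = 0 := by
    rw [real_inner_comm]
    exact (Submodule.mem_orthogonal F v).1 hv p (F.orthogonalProjectionOnto u).2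
  have key : |⟪v, u⟫| ≤ Real.sin α * ‖v‖ := by
    have : ⟪v, u⟫ = ⟪v, u - p⟫ := by rw [inner_sub_right, hvp, sub_zero]
    rw [this]
    calc |⟪v, u - p⟫| ≤ ‖v‖ * ‖u - p‖ := abs_real_inner_le_norm v (u - p)
      _ ≤ ‖v‖ * Real.sin α := by
          exact mul_le_mul_of_nonneg_left hup (norm_nonneg v)
      _ = Real.sin α * ‖v‖ := mul_comm _ _
  have hwu : ⟪v, w⟫ = ‖w‖ * ⟪v, u⟫ := by
    rw [hu_def, real_inner_smul_right]
    field_simp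
  calc |⟪v, w⟫| = ‖w‖ * |⟪v, u⟫| := by
        rw [hwu, abs_mul, abs_of_pos hwpos]
    _ ≤ ‖w‖ * (Real.sin α * ‖v‖) := mul_le_mul_of_nonneg_left key hwpos.le
    _ = Real.sin α * ‖v‖ * ‖w‖ := by ring
end

section
/- Let d and m be positive integers, let L₁, L₂ : ℝ^d → ℝ^m be linear maps, and let α, β ∈ [0, π/2]. Assume ‖L₁‖_op ≤ sin α, and assume that for every x ∈ ℝ^d with ‖x‖ = 1 there exists y ∈ ℝ^d such that ‖(x, L₂ x) − (y, L₁ y)‖ ≤ sin β, where the norm is the Euclidean product norm on ℝ^d × ℝ^m. Then ‖L₁ − L₂‖_op ≤ sin β · (1 + sin α). -/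
open scoped RealInnerProductSpace

/-- Paper's lemma `norm_from_angle`: if `‖L₁‖_op ≤ sin α` and every unit `x` admits `y`
with `‖(x, L₂ x) − (y, L₁ y)‖ ≤ sin β` in the Euclidean product norm, then
`‖L₁ − L₂‖_op ≤ sin β (1 + sin α)`. -/
theorem stmt_7 (d m : ℕ) (hd : 0 < d) (hm : 0 < m)
    (L₁ L₂ : EuclideanSpace ℝ (Fin d) →L[ℝ] EuclideanSpace ℝ (Fin m))
    (α β : ℝ) (hα0 : 0 ≤ α) (hα : α ≤ Real.pi / 2) (hβ0 : 0 ≤ β) (hβ : β ≤ Real.pi / 2)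
    (hL1 : ‖L₁‖ ≤ Real.sin α)
    (hpair : ∀ x : EuclideanSpace ℝ (Fin d), ‖x‖ = 1 →
      ∃ y : EuclideanSpace ℝ (Fin d),
        Real.sqrt (‖x - y‖ ^ 2 + ‖L₂ x - L₁ y‖ ^ 2) ≤ Real.sin β) :
    ‖L₁ - L₂‖ ≤ Real.sin β * (1 + Real.sin α) := by
  have hsβ : 0 ≤ Real.sin β := Real.sin_nonneg_of_nonneg_of_le_pi hβ0
    (hβ.trans (by linarith [Real.pi_pos]))
  have hsα : 0 ≤ Real.sin α := Real.sin_nonneg_of_nonneg_of_le_pi hα0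
    (hα.trans (by linarith [Real.pi_pos]))
  apply ContinuousLinearMap.opNorm_le_of_unit_norm (by positivity)
  intro x hx
  obtain ⟨y, hy⟩ := hpair x hx
  have h1 : ‖x - y‖ ^ 2 + ‖L₂ x - L₁ y‖ ^ 2 ≤ Real.sin β ^ 2 := by
    nlinarith [hy, Real.sq_sqrt (by positivity : (0:ℝ) ≤ ‖x - y‖ ^ 2 + ‖L₂ x - L₁ y‖ ^ 2),
      Real.sqrt_nonneg (‖x - y‖ ^ 2 + ‖L₂ x - L₁ y‖ ^ 2)]
  have hxy : ‖x - y‖ ≤ Real.sin β := by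
    nlinarith [norm_nonneg (x - y), sq_nonneg ‖L₂ x - L₁ y‖]
  have hLxy : ‖L₂ x - L₁ y‖ ≤ Real.sin β := by
    nlinarith [norm_nonneg (L₂ x - L₁ y), sq_nonneg ‖x - y‖]
  have hL1xy : ‖L₁ x - L₁ y‖ ≤ Real.sin α * Real.sin β := by
    calc ‖L₁ x - L₁ y‖ = ‖L₁ (x - y)‖ := by rw [map_sub]
    _ ≤ ‖L₁‖ * ‖x - y‖ := L₁.le_opNorm _
    _ ≤ Real.sin α * Real.sin β := by
        exact mul_le_mul hL1 hxy (norm_nonneg _) hsα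
  calc ‖(L₁ - L₂) x‖ = ‖(L₁ x - L₁ y) - (L₂ x - L₁ y)‖ := by
        simp [ContinuousLinearMap.sub_apply]
    _ ≤ ‖L₁ x - L₁ y‖ + ‖L₂ x - L₁ y‖ := norm_sub_le _ _
    _ ≤ Real.sin α * Real.sin β + Real.sin β := by linarith
    _ = Real.sin β * (1 + Real.sin α) := by ring
end

section
/- Let d ≥ 1 be an integer, R > 0, Ω a Borel subset of the closed ball of radius R centered at 0 in ℝ^d, and 0 < μ_min ≤ μ_max. Let ν be a probability measure on ℝ^d having density f with respect to Lebesgue measure with f = 0 outside Ω and μ_min ≤ f(x) ≤ μ_max for almost every x ∈ Ω. Then for every ε > 0, δ ∈ (0,1), and ρ > 0, there exists N such that for all n > N the following holds: if X₁, …, Xₙ are i.i.d. samples from ν (i.e., the sample is distributed according to the n-fold product measure ν^⊗n), then with probability at least 1 − δ, simultaneously for every x₀ ∈ ℝ^d with the open ball B(x₀, ρ) contained in Ω, the number of indices i with X_i ∈ B(x₀, ρ) is strictly greater than n·((1/2)·μ_min·V_d·ρ^d − ε) and strictly less than n·(2·μ_max·V_d·ρ^d + ε). -/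
open MeasureTheory
open scoped Classical
open scoped ProbabilityTheory

section Aux

variable {α : Type*} [MeasurableSpace α] (ν : Measure α) [IsProbabilityMeasure ν] {n : ℕ}

lemma aux_mp_eval (i : Fin n) :
    MeasurePreserving (fun X : Fin n → α => X i) (Measure.pi fun _ => ν) ν := by
  refine ⟨measurable_pi_apply i, ?_⟩
  ext s hs
  rw [Measure.map_apply (measurable_pi_apply i) hs]
  have h : (fun X : Fin n → α => X i) ⁻¹' s
      = Set.pi Set.univ (fun j => if j = i then s else Set.univ) := by
    ext X
    simp only [Set.mem_preimage, Set.mem_pi, Set.mem_univ, true_implies]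
    constructor
    · intro h j; split <;> simp_all
    · intro h; simpa using h i
  rw [h, Measure.pi_pi]
  rw [Finset.prod_eq_single i (fun j _ hj => by rw [if_neg hj, measure_univ]) (by simp)]
  simp

lemma aux_iIndep_eval :
    ProbabilityTheory.iIndepFun
      (fun (i : Fin n) (X : Fin n → α) => X i) (Measure.pi fun _ => ν) := by
  rw [ProbabilityTheory.iIndepFun_iff_measure_inter_preimage_eq_mul]
  intro S sets hsets
  have h : (⋂ i ∈ S, (fun X : Fin n → α => X i) ⁻¹' sets i)
      = Set.pi Set.univ (fun j => if j ∈ S then sets j else Set.univ) := by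
    ext X
    simp only [Set.mem_iInter, Set.mem_preimage, Set.mem_pi, Set.mem_univ, true_implies]
    constructor
    · intro h j; split <;> simp_all
    · intro h j hj; have := h j; rw [if_pos hj] at this; exact this
  rw [h, Measure.pi_pi]
  have h2 : ∀ i ∈ S, (Measure.pi fun _ : Fin n => ν) ((fun X : Fin n → α => X i) ⁻¹' sets i)
      = ν (sets i) := by
    intro i hi
    rw [← Measure.map_apply (measurable_pi_apply i) (hsets i hi), (aux_mp_eval ν i).map_eq]
  rw [Finset.prod_congr rfl h2]
  have : ∀ j : Fin n, ν (if j ∈ S then sets j else Set.univ)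
      = if j ∈ S then ν (sets j) else 1 := by
    intro j; split <;> simp
  rw [Finset.prod_congr rfl (fun j _ => this j), Finset.prod_ite_mem, Finset.univ_inter]

/-- Chebyshev bound for the number of samples in a fixed set. -/
lemma aux_cheby (A : Set α) (hA : MeasurableSet A) (n : ℕ) {c : ℝ} (hc : 0 < c) :
    (Measure.pi fun _ : Fin n => ν)
      {X : Fin n → α | c ≤ |((Finset.univ.filter fun i => X i ∈ A).card : ℝ)
          - n * (ν A).toReal|}
      ≤ ENNReal.ofReal (n / c ^ 2) := by
  set π := (Measure.pi fun _ : Fin n => ν) with hπ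
  set ind : α → ℝ := A.indicator (fun _ => (1:ℝ)) with hind
  have hindmeas : Measurable ind := measurable_const.indicator hA
  have hindmem : MemLp ind 2 ν := memLp_indicator_const 2 hA 1 (Or.inr (measure_ne_top ν A))
  set Y : Fin n → (Fin n → α) → ℝ := fun i X => ind (X i) with hY
  have hYmem : ∀ i, MemLp (Y i) 2 π := fun i =>
    hindmem.comp_measurePreserving (aux_mp_eval ν i)
  have hEY : ∀ i, ∫ X, Y i X ∂π = (ν A).toReal := by
    intro i
    have h1 : ∫ X, Y i X ∂π = ∫ x, ind x ∂(Measure.map (fun X : Fin n → α => X i) π) := by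
      rw [integral_map (measurable_pi_apply i).aemeasurable hindmeas.aestronglyMeasurable]
    rw [h1, (aux_mp_eval ν i).map_eq, hind, integral_indicator_const (1:ℝ) hA]
    simp [Measure.real]
  have hcard : ∀ X : Fin n → α,
      ((Finset.univ.filter fun i => X i ∈ A).card : ℝ) = ∑ i, Y i X := by
    intro X
    rw [Finset.card_filter]
    push_cast
    refine Finset.sum_congr rfl fun i _ => ?_
    simp [hY, hind, Set.indicator_apply]
  set F : (Fin n → α) → ℝ := ∑ i, Y i with hF
  have hFapp : ∀ X, F X = ∑ i, Y i X := by intro X; simp [hF]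
  have hFmem : MemLp F 2 π := memLp_finset_sum' _ (fun i _ => hYmem i)
  have hEF : ∫ X, F X ∂π = n * (ν A).toReal := by
    have : ∫ X, F X ∂π = ∑ i, ∫ X, Y i X ∂π := by
      simp only [hFapp]
      exact integral_finset_sum _ (fun i _ => (hYmem i).integrable one_le_two)
    rw [this, Finset.sum_congr rfl (fun i _ => hEY i)]
    simp [mul_comm]
  have hindep := (aux_iIndep_eval ν (n := n)).comp (fun _ => ind) (fun _ => hindmeas)
  have hvar : ProbabilityTheory.variance F π ≤ n := by
    have hsum : ProbabilityTheory.variance F π = ∑ i, ProbabilityTheory.variance (Y i) π := by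
      refine ProbabilityTheory.IndepFun.variance_sum (fun i _ => hYmem i) ?_
      intro i _ j _ hij
      exact hindep.indepFun hij
    rw [hsum]
    have h1 : ∀ i : Fin n, ProbabilityTheory.variance (Y i) π ≤ 1 := by
      intro i
      rw [ProbabilityTheory.variance_eq_sub (hYmem i)]
      have hsq : (fun X => Y i X ^ 2) = Y i := by
        funext X
        simp only [hY, hind, Set.indicator_apply]
        split <;> norm_num
      have h2 : π[(Y i) ^ 2] = (ν A).toReal := by
        have : (Y i) ^ 2 = Y i := by funext X; simpa using congrFun hsq X
        rw [this, hEY i]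
      calc π[(Y i) ^ 2] - π[Y i] ^ 2 ≤ π[(Y i) ^ 2] := sub_le_self _ (sq_nonneg _)
        _ = (ν A).toReal := h2
        _ ≤ 1 := by
            have := prob_le_one (μ := ν) (s := A)
            simpa using ENNReal.toReal_mono ENNReal.one_ne_top this
    calc ∑ i, ProbabilityTheory.variance (Y i) π ≤ ∑ _i : Fin n, (1:ℝ) :=
          Finset.sum_le_sum (fun i _ => h1 i)
      _ = n := by simp
  have hset : {X : Fin n → α | c ≤ |((Finset.univ.filter fun i => X i ∈ A).card : ℝ)
      - n * (ν A).toReal|} = {X | c ≤ |F X - π[F]|} := by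
    ext X
    rw [Set.mem_setOf_eq, Set.mem_setOf_eq, hcard X, hEF, hFapp]
  rw [hset]
  calc π {X | c ≤ |F X - π[F]|} ≤ ENNReal.ofReal (ProbabilityTheory.variance F π / c ^ 2) :=
        ProbabilityTheory.meas_ge_le_variance_div_sq hFmem hc
    _ ≤ ENNReal.ofReal (n / c ^ 2) := by
        apply ENNReal.ofReal_le_ofReal
        exact div_le_div_of_nonneg_right hvar (by positivity) |>.trans_eq rfl

end Aux

set_option maxHeartbeats 1000000 in
/-- **Number of samples in a ball.**  If `ν` has a density `f` supported on
`Ω ⊆ closedBall 0 R` with `μ_min ≤ f ≤ μ_max` a.e. on `Ω`, then for every `ε, δ, ρ`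
there is `N` such that for all `n > N`, with `ν^⊗n`-probability at least `1 − δ`,
simultaneously for every `x₀` with `ball x₀ ρ ⊆ Ω`, the number of samples in
`ball x₀ ρ` lies strictly between `n((1/2)μ_min V_d ρ^d − ε)` and
`n(2 μ_max V_d ρ^d + ε)`, where `V_d = π^{d/2}/Γ(d/2+1)`. -/
theorem stmt_8 (d : ℕ) (hd : 1 ≤ d) (R : ℝ) (hR : 0 < R)
    (Ω : Set (EuclideanSpace ℝ (Fin d))) (hΩmeas : MeasurableSet Ω)
    (hΩsub : Ω ⊆ Metric.closedBall 0 R)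
    (μmin μmax : ℝ) (hμmin : 0 < μmin) (hμ : μmin ≤ μmax)
    (f : EuclideanSpace ℝ (Fin d) → ℝ) (hf0 : ∀ x ∉ Ω, f x = 0)
    (hfb : ∀ᵐ x ∂(volume : Measure (EuclideanSpace ℝ (Fin d))),
      x ∈ Ω → μmin ≤ f x ∧ f x ≤ μmax)
    (ν : Measure (EuclideanSpace ℝ (Fin d))) [IsProbabilityMeasure ν]
    (hν : ν = volume.withDensity fun x => ENNReal.ofReal (f x)) :
    ∀ ε > 0, ∀ δ ∈ Set.Ioo (0 : ℝ) 1, ∀ ρ > 0, ∃ N : ℕ, ∀ n > N,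
      (Measure.pi fun _ : Fin n => ν)
        {X : Fin n → EuclideanSpace ℝ (Fin d) |
          ∀ x₀ : EuclideanSpace ℝ (Fin d), Metric.ball x₀ ρ ⊆ Ω →
            (n : ℝ) * ((1 / 2) * μmin *
                (Real.pi ^ ((d : ℝ) / 2) / Real.Gamma ((d : ℝ) / 2 + 1)) * ρ ^ d - ε)
              < ((Finset.univ.filter fun i => X i ∈ Metric.ball x₀ ρ).card : ℝ) ∧
            ((Finset.univ.filter fun i => X i ∈ Metric.ball x₀ ρ).card : ℝ)
              < (n : ℝ) * (2 * μmax *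
                (Real.pi ^ ((d : ℝ) / 2) / Real.Gamma ((d : ℝ) / 2 + 1)) * ρ ^ d + ε)}
        ≥ ENNReal.ofReal (1 - δ) := by
  intro ε hε δ hδ ρ hρ
  obtain ⟨hδ0, hδ1⟩ := hδ
  set V : ℝ := Real.pi ^ ((d : ℝ) / 2) / Real.Gamma ((d : ℝ) / 2 + 1) with hVdef
  have hV : 0 < V := div_pos (Real.rpow_pos_of_pos Real.pi_pos _)
    (Real.Gamma_pos_of_pos (by positivity))
  have hμmax : 0 < μmax := lt_of_lt_of_le hμmin hμ
  -- volume of balls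
  have hvol : ∀ (x : EuclideanSpace ℝ (Fin d)) (r : ℝ), 0 ≤ r →
      volume (Metric.ball x r) = ENNReal.ofReal (r ^ d * V) := by
    intro x r hr
    haveI : Nonempty (Fin d) := ⟨⟨0, hd⟩⟩
    rw [EuclideanSpace.volume_ball (Fin d) x r, Fintype.card_fin,
      ← ENNReal.ofReal_pow hr, ← ENNReal.ofReal_mul (by positivity)]
    congr 2
    rw [Real.sqrt_eq_rpow, ← Real.rpow_natCast (Real.pi ^ ((1:ℝ)/2)) d,
      ← Real.rpow_mul Real.pi_pos.le]
    ring_nf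
    rw [hVdef]; ring_nf
  -- density bounds
  have hub : ∀ A : Set (EuclideanSpace ℝ (Fin d)), MeasurableSet A →
      ν A ≤ ENNReal.ofReal μmax * volume A := by
    intro A hA
    rw [hν, withDensity_apply _ hA]
    have hae : ∀ᵐ x ∂(volume.restrict A), ENNReal.ofReal (f x) ≤ ENNReal.ofReal μmax := by
      refine ae_restrict_of_ae ?_
      filter_upwards [hfb] with x hx
      by_cases hmem : x ∈ Ω
      · exact ENNReal.ofReal_le_ofReal (hx hmem).2
      · rw [hf0 x hmem]; exact ENNReal.ofReal_le_ofReal hμmax.le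
    calc ∫⁻ x in A, ENNReal.ofReal (f x) ∂volume
        ≤ ∫⁻ _x in A, ENNReal.ofReal μmax ∂volume := lintegral_mono_ae hae
      _ = ENNReal.ofReal μmax * volume A := setLIntegral_const A _
  have hlb : ∀ A : Set (EuclideanSpace ℝ (Fin d)), MeasurableSet A → A ⊆ Ω →
      ENNReal.ofReal μmin * volume A ≤ ν A := by
    intro A hA hAΩ
    rw [hν, withDensity_apply _ hA]
    have hae : ∀ᵐ x ∂(volume.restrict A), ENNReal.ofReal μmin ≤ ENNReal.ofReal (f x) := by
      filter_upwards [ae_restrict_of_ae hfb, ae_restrict_mem hA] with x hx hxA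
      exact ENNReal.ofReal_le_ofReal (hx (hAΩ hxA)).1
    calc ENNReal.ofReal μmin * volume A
        = ∫⁻ _x in A, ENNReal.ofReal μmin ∂volume := (setLIntegral_const A _).symm
      _ ≤ ∫⁻ x in A, ENNReal.ofReal (f x) ∂volume := lintegral_mono_ae hae
  -- real versions
  have hpub : ∀ (y : EuclideanSpace ℝ (Fin d)) (r : ℝ), 0 ≤ r →
      (ν (Metric.ball y r)).toReal ≤ μmax * (r ^ d * V) := by
    intro y r hr
    have h1 : ν (Metric.ball y r) ≤ ENNReal.ofReal (μmax * (r ^ d * V)) := by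
      calc ν (Metric.ball y r) ≤ ENNReal.ofReal μmax * volume (Metric.ball y r) :=
            hub _ Metric.isOpen_ball.measurableSet
        _ = ENNReal.ofReal (μmax * (r ^ d * V)) := by
            rw [hvol y r hr, ← ENNReal.ofReal_mul hμmax.le]
    exact ENNReal.toReal_le_of_le_ofReal (by positivity) h1
  have hplb : ∀ (y : EuclideanSpace ℝ (Fin d)) (r : ℝ), 0 ≤ r → Metric.ball y r ⊆ Ω →
      μmin * (r ^ d * V) ≤ (ν (Metric.ball y r)).toReal := by
    intro y r hr hsub
    have h1 : ENNReal.ofReal (μmin * (r ^ d * V)) ≤ ν (Metric.ball y r) := by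
      calc ENNReal.ofReal (μmin * (r ^ d * V))
          = ENNReal.ofReal μmin * volume (Metric.ball y r) := by
            rw [hvol y r hr, ← ENNReal.ofReal_mul hμmin.le]
        _ ≤ ν (Metric.ball y r) := hlb _ Metric.isOpen_ball.measurableSet hsub
    exact (ENNReal.ofReal_le_iff_le_toReal (measure_ne_top ν _)).mp h1
  -- choice of τ
  obtain ⟨τ, hτmem, hτρ, hτ2, hτ3⟩ :
      ∃ τ : ℝ, τ ∈ Set.Ioi (0:ℝ) ∧ τ < ρ ∧ (ρ + τ) ^ d ≤ 2 * ρ ^ d ∧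
        ρ ^ d / 2 ≤ (ρ - τ) ^ d := by
    have c1 : Filter.Tendsto (fun τ : ℝ => (ρ + τ) ^ d) (nhds 0) (nhds (ρ ^ d)) := by
      have : Continuous (fun τ : ℝ => (ρ + τ) ^ d) := by continuity
      simpa using this.tendsto 0
    have c2 : Filter.Tendsto (fun τ : ℝ => (ρ - τ) ^ d) (nhds 0) (nhds (ρ ^ d)) := by
      have : Continuous (fun τ : ℝ => (ρ - τ) ^ d) := by continuity
      simpa using this.tendsto 0
    have e1 : ∀ᶠ τ in nhds (0:ℝ), (ρ + τ) ^ d < 2 * ρ ^ d :=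
      c1.eventually_lt_const (by nlinarith [pow_pos hρ d])
    have e2 : ∀ᶠ τ in nhds (0:ℝ), ρ ^ d / 2 < (ρ - τ) ^ d :=
      c2.eventually_const_lt (by nlinarith [pow_pos hρ d])
    have e3 : ∀ᶠ τ in nhds (0:ℝ), τ < ρ := eventually_lt_nhds hρ
    have := ((e1.and (e2.and e3)).filter_mono (nhdsWithin_le_nhds (s := Set.Ioi (0:ℝ)))).and
      self_mem_nhdsWithin
    obtain ⟨τ, ⟨h1, h2, h3⟩, h4⟩ := this.exists
    exact ⟨τ, h4, h3, h1.le, h2.le⟩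
  have hτ0 : 0 < τ := hτmem
  -- finite net
  obtain ⟨t, htfin, htsub⟩ := Metric.totallyBounded_iff.mp
    (isCompact_closedBall (0 : EuclideanSpace ℝ (Fin d)) R).totallyBounded τ hτ0
  set T : Finset (EuclideanSpace ℝ (Fin d)) := htfin.toFinset with hTdef
  have hTne : T.Nonempty := by
    have h0 : (0 : EuclideanSpace ℝ (Fin d)) ∈ Metric.closedBall (0:EuclideanSpace ℝ (Fin d)) R :=
      Metric.mem_closedBall_self hR.le
    obtain ⟨y, hy⟩ := Set.mem_iUnion₂.mp (htsub h0)
    exact ⟨y, htfin.mem_toFinset.mpr hy.1⟩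
  have hTpos : 0 < (T.card : ℝ) := by exact_mod_cast Finset.card_pos.mpr hTne
  refine ⟨max 1 ⌈8 * (T.card : ℝ) / (δ * ε ^ 2)⌉₊, ?_⟩
  intro n hn
  have hn1 : 1 ≤ n := le_trans (le_max_left 1 _) hn.le
  have hnpos : (0:ℝ) < n := by exact_mod_cast lt_of_lt_of_le one_pos hn1
  have hkey : 8 * (T.card : ℝ) / (δ * ε ^ 2) < n := by
    have h1 : (⌈8 * (T.card : ℝ) / (δ * ε ^ 2)⌉₊ : ℝ) < n := by
      exact_mod_cast lt_of_le_of_lt (le_max_right 1 _) hn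
    exact lt_of_le_of_lt (Nat.le_ceil _) h1
  set π := (Measure.pi fun _ : Fin n => ν) with hπdef
  set c : ℝ := n * (ε / 2) with hcdef
  have hc : 0 < c := by rw [hcdef]; positivity
  set Bad : Set (Fin n → EuclideanSpace ℝ (Fin d)) := ⋃ y ∈ T,
    ({X : Fin n → EuclideanSpace ℝ (Fin d) |
        c ≤ |((Finset.univ.filter fun i => X i ∈ Metric.ball y (ρ + τ)).card : ℝ)
          - n * (ν (Metric.ball y (ρ + τ))).toReal|} ∪
     {X : Fin n → EuclideanSpace ℝ (Fin d) |
        c ≤ |((Finset.univ.filter fun i => X i ∈ Metric.ball y (ρ - τ)).card : ℝ)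
          - n * (ν (Metric.ball y (ρ - τ))).toReal|}) with hBaddef
  have hBadle : π Bad ≤ ENNReal.ofReal δ := by
    have h1 : π Bad ≤ ∑ y ∈ T, (ENNReal.ofReal ((n:ℝ) / c ^ 2) + ENNReal.ofReal ((n:ℝ) / c ^ 2)) := by
      refine le_trans (measure_biUnion_finset_le T _) (Finset.sum_le_sum ?_)
      intro y _
      refine le_trans (measure_union_le _ _) (add_le_add ?_ ?_) <;>
        exact aux_cheby ν _ Metric.isOpen_ball.measurableSet n hc
    have h2 : ∑ y ∈ T, (ENNReal.ofReal ((n:ℝ) / c ^ 2) + ENNReal.ofReal ((n:ℝ) / c ^ 2))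
        = ENNReal.ofReal ((T.card : ℝ) * ((n:ℝ) / c ^ 2 + (n:ℝ) / c ^ 2)) := by
      rw [Finset.sum_const, ← ENNReal.ofReal_add (by positivity) (by positivity), nsmul_eq_mul,
        ← ENNReal.ofReal_natCast T.card, ← ENNReal.ofReal_mul (Nat.cast_nonneg _)]
    refine le_trans (h1.trans_eq h2) (ENNReal.ofReal_le_ofReal ?_)
    have hn0 : (n:ℝ) ≠ 0 := hnpos.ne'
    have hε0 : ε ≠ 0 := hε.ne'
    have hcsq : ((n:ℝ) / c ^ 2 + (n:ℝ) / c ^ 2) = 8 / ((n:ℝ) * ε ^ 2) := by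
      rw [hcdef]
      field_simp
      ring
    rw [hcsq]
    have h3 : 8 * (T.card:ℝ) < n * (δ * ε ^ 2) := by
      have := (div_lt_iff₀ (by positivity : (0:ℝ) < δ * ε ^ 2)).mp hkey
      linarith
    have h4 : (T.card:ℝ) * (8 / ((n:ℝ) * ε ^ 2)) = (8 * (T.card:ℝ)) / ((n:ℝ) * ε ^ 2) := by ring
    rw [h4, div_le_iff₀ (by positivity)]
    nlinarith
  have hsubset : Badᶜ ⊆ {X : Fin n → EuclideanSpace ℝ (Fin d) |
      ∀ x₀ : EuclideanSpace ℝ (Fin d), Metric.ball x₀ ρ ⊆ Ω →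
        (n : ℝ) * ((1 / 2) * μmin * V * ρ ^ d - ε)
          < ((Finset.univ.filter fun i => X i ∈ Metric.ball x₀ ρ).card : ℝ) ∧
        ((Finset.univ.filter fun i => X i ∈ Metric.ball x₀ ρ).card : ℝ)
          < (n : ℝ) * (2 * μmax * V * ρ ^ d + ε)} := by
    intro X hX
    have hX' : X ∉ Bad := hX
    simp only [Set.mem_setOf_eq]
    intro x₀ hx₀
    have hx₀R : x₀ ∈ Metric.closedBall (0 : EuclideanSpace ℝ (Fin d)) R :=
      hΩsub (hx₀ (Metric.mem_ball_self hρ))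
    obtain ⟨y, hyt, hxy⟩ := Set.mem_iUnion₂.mp (htsub hx₀R)
    have hyT : y ∈ T := htfin.mem_toFinset.mpr hyt
    have hdxy : dist x₀ y < τ := Metric.mem_ball.mp hxy
    have hne1 : |((Finset.univ.filter fun i => X i ∈ Metric.ball y (ρ + τ)).card : ℝ)
        - n * (ν (Metric.ball y (ρ + τ))).toReal| < c := by
      by_contra h
      push_neg at h
      exact hX' (Set.mem_biUnion hyT (Or.inl h))
    have hne2 : |((Finset.univ.filter fun i => X i ∈ Metric.ball y (ρ - τ)).card : ℝ)
        - n * (ν (Metric.ball y (ρ - τ))).toReal| < c := by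
      by_contra h
      push_neg at h
      exact hX' (Set.mem_biUnion hyT (Or.inr h))
    have hsub1 : Metric.ball x₀ ρ ⊆ Metric.ball y (ρ + τ) := by
      intro z hz
      rw [Metric.mem_ball] at hz ⊢
      have := dist_triangle z x₀ y
      linarith
    have hsub2 : Metric.ball y (ρ - τ) ⊆ Metric.ball x₀ ρ := by
      intro z hz
      rw [Metric.mem_ball] at hz ⊢
      have h1 := dist_triangle z y x₀
      have h2 : dist y x₀ < τ := by rw [dist_comm]; exact hdxy
      linarith
    have hcount1 : ((Finset.univ.filter fun i => X i ∈ Metric.ball x₀ ρ).card : ℝ)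
        ≤ ((Finset.univ.filter fun i => X i ∈ Metric.ball y (ρ + τ)).card : ℝ) := by
      exact_mod_cast Finset.card_le_card
        (Finset.monotone_filter_right _ (fun i _ hi => hsub1 hi))
    have hcount2 : ((Finset.univ.filter fun i => X i ∈ Metric.ball y (ρ - τ)).card : ℝ)
        ≤ ((Finset.univ.filter fun i => X i ∈ Metric.ball x₀ ρ).card : ℝ) := by
      exact_mod_cast Finset.card_le_card
        (Finset.monotone_filter_right _ (fun i _ hi => hsub2 hi))
    have hp1 : (ν (Metric.ball y (ρ + τ))).toReal ≤ μmax * ((ρ + τ) ^ d * V) :=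
      hpub y _ (by linarith)
    have hp2 : μmin * ((ρ - τ) ^ d * V) ≤ (ν (Metric.ball y (ρ - τ))).toReal :=
      hplb y _ (by linarith) (hsub2.trans hx₀)
    have habs1 := (abs_lt.mp hne1).2
    have habs2 := (abs_lt.mp hne2).1
    have hm1 : (n:ℝ) * (ν (Metric.ball y (ρ + τ))).toReal ≤ n * (μmax * (2 * ρ ^ d * V)) := by
      refine mul_le_mul_of_nonneg_left (le_trans hp1 ?_) hnpos.le
      have h := mul_le_mul_of_nonneg_left hτ2 (mul_nonneg hμmax.le hV.le)
      nlinarith [h]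
    have hm2 : (n:ℝ) * (μmin * (ρ ^ d / 2 * V)) ≤ n * (ν (Metric.ball y (ρ - τ))).toReal := by
      refine mul_le_mul_of_nonneg_left (le_trans ?_ hp2) hnpos.le
      have h := mul_le_mul_of_nonneg_left hτ3 (mul_nonneg hμmin.le hV.le)
      nlinarith [h]
    have hnε : (0:ℝ) < n * ε := mul_pos hnpos hε
    constructor
    · nlinarith [hcount2, habs2, hm2, hc]
    · nlinarith [hcount1, habs1, hm1, hc]
  refine le_trans ?_ (measure_mono hsubset)
  have huniv : (1:ENNReal) ≤ π Badᶜ + π Bad := by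
    rw [← measure_univ (μ := π)]
    refine le_trans (measure_mono ?_) (measure_union_le _ _)
    intro X _
    exact (em (X ∈ Bad)).elim Or.inr Or.inl
  rw [ENNReal.ofReal_sub 1 hδ0.le, ENNReal.ofReal_one, tsub_le_iff_right]
  calc (1:ENNReal) ≤ π Badᶜ + π Bad := huniv
    _ ≤ π Badᶜ + ENNReal.ofReal δ := add_le_add le_rfl hBadle
end

section
/- Let m ≥ 1 be an integer, σ > 0, a ≥ 0, and let g : S^{m−1} → ℝ be a measurable function with σ ≤ g(θ) ≤ σ·(1 + a) for all θ ∈ S^{m−1}. Then ‖∫_{S^{m−1}} θ·g(θ)^{m+1} dσ(θ)‖ ≤ σ·((1 + a)^{m+1} − 1)·∫_{S^{m−1}} g(θ)^m dσ(θ). Moreover, if additionally (m+1)·a ≤ 1, then (m/(m+1))·‖∫_{S^{m−1}} θ·g(θ)^{m+1} dσ(θ)‖ / (∫_{S^{m−1}} g(θ)^m dσ(θ)) ≤ 2·(m+1)·a·σ. -/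
open MeasureTheory
open scoped RealInnerProductSpace

open Metric Set in
private lemma neg_map_toSphere (m : ℕ) :
    Measure.map (fun θ : sphere (0 : EuclideanSpace ℝ (Fin m)) 1 => -θ)
      (volume : Measure (EuclideanSpace ℝ (Fin m))).toSphere =
    (volume : Measure (EuclideanSpace ℝ (Fin m))).toSphere := by
  set E := EuclideanSpace ℝ (Fin m)
  have hmeas : Measurable (fun θ : sphere (0 : E) 1 => -θ) := continuous_neg.measurable
  refine Measure.ext fun S hS => ?_
  rw [Measure.map_apply hmeas hS, Measure.toSphere_apply' _ (hmeas hS),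
    Measure.toSphere_apply' _ hS]
  congr 1
  have himg : (Subtype.val '' ((fun θ : sphere (0 : E) 1 => -θ) ⁻¹' S))
      = -(Subtype.val '' S) := by
    ext x
    constructor
    · rintro ⟨θ, hθ, rfl⟩
      exact ⟨-θ, hθ, by simp⟩
    · intro hx
      rw [Set.mem_neg] at hx
      obtain ⟨θ, hθ, hc⟩ := hx
      exact ⟨-θ, by simpa using hθ, by simp [hc]⟩
  rw [himg, Set.smul_neg, Measure.measure_neg]

open Metric Set in
private lemma integral_coe_toSphere_zero (m : ℕ) :
    (∫ θ : sphere (0 : EuclideanSpace ℝ (Fin m)) 1, (θ : EuclideanSpace ℝ (Fin m))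
      ∂(volume : Measure (EuclideanSpace ℝ (Fin m))).toSphere) = 0 := by
  set E := EuclideanSpace ℝ (Fin m)
  set ν := (volume : Measure E).toSphere
  set I := ∫ θ : sphere (0 : E) 1, (θ : E) ∂ν with hI
  have hmeas : Measurable (fun θ : sphere (0 : E) 1 => -θ) := continuous_neg.measurable
  have key : I = -I := by
    conv_lhs => rw [hI]
    rw [show ν = Measure.map (fun θ : sphere (0 : E) 1 => -θ) ν from (neg_map_toSphere m).symm]
    rw [integral_map hmeas.aemeasurable continuous_subtype_val.aestronglyMeasurable]
    simp only [coe_neg_sphere]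
    rw [integral_neg]
  have h2 : (2 : ℝ) • I = 0 := by
    rw [two_smul]
    nth_rewrite 2 [key]
    simp
  simpa using (smul_eq_zero.1 h2).resolve_left (by norm_num)

private lemma pow_one_add_le_aux (a : ℝ) (ha : 0 ≤ a) :
    ∀ n : ℕ, (n : ℝ) * a ≤ 1 → (1 + a) ^ n ≤ 1 + n * a + (n * a) ^ 2 := by
  intro n
  induction n with
  | zero => simp
  | succ n ih =>
    intro h
    have hna : (n : ℝ) * a ≤ 1 := by
      push_cast at h ⊢
      nlinarith
    have hih := ih hna
    have hp : (0:ℝ) ≤ (1 + a) ^ n := by positivity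
    rw [pow_succ]
    push_cast at h ⊢
    nlinarith [sq_nonneg ((n:ℝ)*a), mul_nonneg (Nat.cast_nonneg (α := ℝ) n) ha]

/-- **Bias bound.**  If `s ≤ g(θ) ≤ s(1+a)` on the unit sphere, then
`‖∫_{S^{m−1}} θ·g(θ)^{m+1} dσ‖ ≤ s((1+a)^{m+1} − 1)·∫_{S^{m−1}} g^m dσ`, and if moreover
`(m+1)a ≤ 1` then `(m/(m+1))·‖∫ θ g^{m+1} dσ‖/(∫ g^m dσ) ≤ 2(m+1)·a·s`.  Here the
sphere surface measure is realized as `volume.toSphere`. -/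
theorem stmt_12 (m : ℕ) (hm : 1 ≤ m) (s a : ℝ) (hs : 0 < s) (ha : 0 ≤ a)
    (g : EuclideanSpace ℝ (Fin m) → ℝ) (hg : Measurable g)
    (hbound : ∀ x : EuclideanSpace ℝ (Fin m), ‖x‖ = 1 → s ≤ g x ∧ g x ≤ s * (1 + a)) :
    (‖∫ θ : Metric.sphere (0 : EuclideanSpace ℝ (Fin m)) 1,
        g (θ : EuclideanSpace ℝ (Fin m)) ^ (m + 1) • (θ : EuclideanSpace ℝ (Fin m))
          ∂((volume : Measure (EuclideanSpace ℝ (Fin m))).toSphere)‖ ≤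
      s * ((1 + a) ^ (m + 1) - 1) *
        ∫ θ : Metric.sphere (0 : EuclideanSpace ℝ (Fin m)) 1,
          g (θ : EuclideanSpace ℝ (Fin m)) ^ m
            ∂((volume : Measure (EuclideanSpace ℝ (Fin m))).toSphere)) ∧
    (((m : ℝ) + 1) * a ≤ 1 →
      ((m : ℝ) / ((m : ℝ) + 1)) *
          ‖∫ θ : Metric.sphere (0 : EuclideanSpace ℝ (Fin m)) 1,
            g (θ : EuclideanSpace ℝ (Fin m)) ^ (m + 1) • (θ : EuclideanSpace ℝ (Fin m))
              ∂((volume : Measure (EuclideanSpace ℝ (Fin m))).toSphere)‖ /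
          (∫ θ : Metric.sphere (0 : EuclideanSpace ℝ (Fin m)) 1,
            g (θ : EuclideanSpace ℝ (Fin m)) ^ m
              ∂((volume : Measure (EuclideanSpace ℝ (Fin m))).toSphere)) ≤
        2 * ((m : ℝ) + 1) * a * s) := by
  let E := EuclideanSpace ℝ (Fin m)
  set ν := (volume : Measure (EuclideanSpace ℝ (Fin m))).toSphere with hν
  have hb : ∀ θ : Metric.sphere (0 : E) 1, s ≤ g θ ∧ g θ ≤ s * (1 + a) :=
    fun θ => hbound θ (norm_eq_of_mem_sphere θ)
  have hnorm1 : ∀ θ : Metric.sphere (0 : E) 1, ‖(θ : E)‖ = 1 := fun θ =>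
    norm_eq_of_mem_sphere θ
  have hgnn : ∀ θ : Metric.sphere (0 : E) 1, 0 ≤ g θ := fun θ => hs.le.trans (hb θ).1
  have hCnn : 0 ≤ (1 + a) ^ (m + 1) - 1 := by
    have : (1:ℝ) ≤ (1 + a) ^ (m + 1) := one_le_pow₀ (by linarith)
    linarith
  -- measurability
  have hgm : Measurable fun θ : Metric.sphere (0 : E) 1 => g θ :=
    hg.comp measurable_subtype_coe
  -- integrability of g^m
  have hGi : Integrable (fun θ : Metric.sphere (0 : E) 1 => g θ ^ m) ν := by
    refine ⟨(hgm.pow_const m).aestronglyMeasurable, ?_⟩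
    refine HasFiniteIntegral.of_bounded (C := (s * (1 + a)) ^ m) (ae_of_all _ fun θ => ?_)
    rw [Real.norm_eq_abs, abs_of_nonneg (pow_nonneg (hgnn θ) m)]
    exact pow_le_pow_left₀ (hgnn θ) (hb θ).2 m
  -- integrability of the vector field
  have hFnorm : ∀ (c : ℝ) (θ : Metric.sphere (0 : E) 1), ‖c • (θ : E)‖ = |c| := by
    intro c θ
    rw [norm_smul, hnorm1 θ, mul_one, Real.norm_eq_abs]
  have hFi : Integrable
      (fun θ : Metric.sphere (0 : E) 1 => g θ ^ (m + 1) • (θ : E)) ν := by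
    refine ⟨((hgm.pow_const (m + 1)).aestronglyMeasurable.smul
      continuous_subtype_val.aestronglyMeasurable), ?_⟩
    refine HasFiniteIntegral.of_bounded (C := (s * (1 + a)) ^ (m + 1)) (ae_of_all _ fun θ => ?_)
    rw [hFnorm, abs_of_nonneg (pow_nonneg (hgnn θ) _)]
    exact pow_le_pow_left₀ (hgnn θ) (hb θ).2 _
  have hci : Integrable (fun θ : Metric.sphere (0 : E) 1 => s ^ (m + 1) • (θ : E)) ν := by
    refine ⟨(Continuous.aestronglyMeasurable (by fun_prop)), ?_⟩
    refine HasFiniteIntegral.of_bounded (C := s ^ (m + 1)) (ae_of_all _ fun θ => ?_)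
    rw [hFnorm, abs_of_nonneg (pow_nonneg hs.le _)]
  -- recenter: the integral equals the integral of (g^{m+1} - s^{m+1}) • θ
  have hzero : (∫ θ : Metric.sphere (0 : E) 1, s ^ (m + 1) • (θ : E) ∂ν) = 0 := by
    rw [integral_smul, integral_coe_toSphere_zero m, smul_zero]
  have hIeq : (∫ θ : Metric.sphere (0 : E) 1, g θ ^ (m + 1) • (θ : E) ∂ν)
      = ∫ θ : Metric.sphere (0 : E) 1, (g θ ^ (m + 1) - s ^ (m + 1)) • (θ : E) ∂ν := by
    rw [show (fun θ : Metric.sphere (0 : E) 1 => (g θ ^ (m + 1) - s ^ (m + 1)) • (θ : E))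
        = fun θ : Metric.sphere (0 : E) 1 =>
            g θ ^ (m + 1) • (θ : E) - s ^ (m + 1) • (θ : E) by
      funext θ; rw [sub_smul]]
    rw [integral_sub hFi hci, hzero, sub_zero]
  -- pointwise bound
  have hpt : ∀ θ : Metric.sphere (0 : E) 1,
      ‖(g θ ^ (m + 1) - s ^ (m + 1)) • (θ : E)‖
        ≤ s * ((1 + a) ^ (m + 1) - 1) * g θ ^ m := by
    intro θ
    obtain ⟨h1, h2⟩ := hb θ
    have hsg : s ^ m ≤ g θ ^ m := pow_le_pow_left₀ hs.le h1 m
    have hup : g θ ^ (m + 1) ≤ s ^ (m + 1) * (1 + a) ^ (m + 1) := by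
      have := pow_le_pow_left₀ (hgnn θ) h2 (m + 1)
      rwa [mul_pow] at this
    have hlow : s ^ (m + 1) ≤ g θ ^ (m + 1) := pow_le_pow_left₀ hs.le h1 (m + 1)
    rw [hFnorm, abs_of_nonneg (by linarith)]
    have hss : s ^ (m + 1) = s * s ^ m := by rw [pow_succ]; ring
    nlinarith [mul_le_mul_of_nonneg_left hsg (mul_nonneg hs.le hCnn)]
  -- part 1
  have hInorm : ‖∫ θ : Metric.sphere (0 : E) 1, g θ ^ (m + 1) • (θ : E) ∂ν‖
      ≤ s * ((1 + a) ^ (m + 1) - 1) * ∫ θ : Metric.sphere (0 : E) 1, g θ ^ m ∂ν := by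
    rw [hIeq]
    calc ‖∫ θ : Metric.sphere (0 : E) 1, (g θ ^ (m + 1) - s ^ (m + 1)) • (θ : E) ∂ν‖
        ≤ ∫ θ : Metric.sphere (0 : E) 1, ‖(g θ ^ (m + 1) - s ^ (m + 1)) • (θ : E)‖ ∂ν :=
          norm_integral_le_integral_norm _
      _ ≤ ∫ θ : Metric.sphere (0 : E) 1, s * ((1 + a) ^ (m + 1) - 1) * g θ ^ m ∂ν := by
          have hsubi : Integrable
              (fun θ : Metric.sphere (0 : E) 1 =>
                (g θ ^ (m + 1) - s ^ (m + 1)) • (θ : E)) ν := by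
            have h' := hFi.sub hci
            simp only [sub_smul]
            exact h'
          exact integral_mono hsubi.norm (hGi.const_mul _) hpt
      _ = s * ((1 + a) ^ (m + 1) - 1) * ∫ θ : Metric.sphere (0 : E) 1, g θ ^ m ∂ν := by
          simpa using integral_smul (s * ((1 + a) ^ (m + 1) - 1))
            (fun θ : Metric.sphere (0 : E) 1 => g θ ^ m) (μ := ν)
  refine ⟨hInorm, fun hma => ?_⟩
  -- positivity of the denominator
  have hνuniv : 0 < (ν Set.univ).toReal := by
    refine ENNReal.toReal_pos ?_ (measure_ne_top ν _)
    rw [hν, Measure.toSphere_apply_univ]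
    have hdim : 0 < Module.finrank ℝ (EuclideanSpace ℝ (Fin m)) := by
      rw [finrank_euclideanSpace, Fintype.card_fin]
      exact hm
    have hball : 0 < (volume : Measure (EuclideanSpace ℝ (Fin m))) (Metric.ball 0 1) :=
      Metric.measure_ball_pos _ _ one_pos
    exact mul_ne_zero (by exact_mod_cast hdim.ne') hball.ne'
  have hden : 0 < ∫ θ : Metric.sphere (0 : E) 1, g θ ^ m ∂ν := by
    have hlb : (∫ _ : Metric.sphere (0 : E) 1, s ^ m ∂ν)
        ≤ ∫ θ : Metric.sphere (0 : E) 1, g θ ^ m ∂ν :=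
      integral_mono (integrable_const _) hGi fun θ => pow_le_pow_left₀ hs.le (hb θ).1 m
    rw [integral_const, smul_eq_mul, measureReal_def] at hlb
    have : 0 < (ν Set.univ).toReal * s ^ m := by positivity
    linarith
  -- bound on the coefficient
  have hcoef : (1 + a) ^ (m + 1) - 1 ≤ 2 * ((m : ℝ) + 1) * a := by
    have hx := pow_one_add_le_aux a ha (m + 1) (by push_cast; linarith)
    have hx2 : (((m : ℕ) + 1 : ℕ) : ℝ) * a ≤ 1 := by push_cast; linarith
    have hsq : ((((m : ℕ) + 1 : ℕ) : ℝ) * a) ^ 2 ≤ (((m : ℕ) + 1 : ℕ) : ℝ) * a := by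
      nlinarith [mul_nonneg (by positivity : (0:ℝ) ≤ (((m : ℕ) + 1 : ℕ) : ℝ)) ha]
    push_cast at hx hsq ⊢
    nlinarith
  -- conclude
  have hkey : ‖∫ θ : Metric.sphere (0 : E) 1, g θ ^ (m + 1) • (θ : E) ∂ν‖
      ≤ 2 * ((m : ℝ) + 1) * a * s * ∫ θ : Metric.sphere (0 : E) 1, g θ ^ m ∂ν := by
    refine hInorm.trans ?_
    have := mul_le_mul_of_nonneg_left hcoef hs.le
    nlinarith [hden.le]
  have hfrac : (m : ℝ) / ((m : ℝ) + 1) ≤ 1 := by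
    rw [div_le_one (by positivity)]
    linarith
  rw [div_le_iff₀ hden]
  have hn0 : 0 ≤ ‖∫ θ : Metric.sphere (0 : E) 1, g θ ^ (m + 1) • (θ : E) ∂ν‖ :=
    norm_nonneg _
  have hfrac0 : 0 ≤ (m : ℝ) / ((m : ℝ) + 1) := by positivity
  nlinarith [mul_le_mul_of_nonneg_left hkey hfrac0]
end

section
/- Let σ and τ be real numbers with 0 < σ ≤ τ and √(σ/τ) + σ/τ ≤ √3/2. Then τ + σ − √(τ² − (√(σ·τ) + σ)²) ≤ 3σ. -/
/-- Deterministic core of the paper's bound: every sample in the region of interest lies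
within distance `3σ` of the tangent space. -/
theorem stmt_13 (σ τ : ℝ) (hσ : 0 < σ) (hστ : σ ≤ τ)
    (h : Real.sqrt (σ / τ) + σ / τ ≤ Real.sqrt 3 / 2) :
    τ + σ - Real.sqrt (τ ^ 2 - (Real.sqrt (σ * τ) + σ) ^ 2) ≤ 3 * σ := by
  have hτ : 0 < τ := lt_of_lt_of_le hσ hστ
  set u := Real.sqrt (σ / τ) with hudef
  have hu0 : 0 ≤ u := Real.sqrt_nonneg _
  have hu2 : u ^ 2 = σ / τ := Real.sq_sqrt (by positivity)
  have hσu : σ = τ * u ^ 2 := by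
    rw [hu2]; field_simp
  have hst : Real.sqrt (σ * τ) = τ * u := by
    rw [show σ * τ = (τ * u) ^ 2 by rw [mul_pow, hu2]; field_simp]
    exact Real.sqrt_sq (by positivity)
  have hs3 : Real.sqrt 3 ≤ 7 / 4 := by
    rw [show (7 : ℝ) / 4 = Real.sqrt ((7 / 4) ^ 2) from (Real.sqrt_sq (by norm_num)).symm]
    exact Real.sqrt_le_sqrt (by norm_num)
  have hu : u ≤ 3 / 5 := by nlinarith [h, hu2, hs3, hu0]
  have key : (Real.sqrt (σ * τ) + σ) ^ 2 ≤ 4 * σ * τ - 4 * σ ^ 2 := by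
    rw [hst, hσu]
    have h1 : 0 ≤ u ^ 2 * (3 - 5 * u) * (1 + u) := by
      apply mul_nonneg (mul_nonneg (sq_nonneg u) (by linarith)) (by linarith)
    nlinarith [sq_nonneg τ, mul_pos hτ hτ, mul_nonneg (mul_nonneg hτ.le hτ.le) h1]
  have h2 : (τ - 2 * σ) ≤ Real.sqrt (τ ^ 2 - (Real.sqrt (σ * τ) + σ) ^ 2) := by
    calc τ - 2 * σ ≤ |τ - 2 * σ| := le_abs_self _
      _ = Real.sqrt ((τ - 2 * σ) ^ 2) := (Real.sqrt_sq_eq_abs _).symm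
      _ ≤ _ := Real.sqrt_le_sqrt (by nlinarith [key])
  linarith
end

section
/- Let E be a real inner product space, q, q' ∈ E, τ > 0, and let w, v ∈ E be unit vectors. Suppose q' = q + t·v for some t ∈ ℝ, and suppose ‖q' − (q + τ·w)‖ ≥ τ and ‖q' − (q − τ·w)‖ ≥ τ. Then t = 0 or |t| ≥ 2·τ·|⟨v, w⟩|. -/
open scoped RealInnerProductSpace

/-- If `q' = q + t • v` lies outside the two open balls of radius `τ` tangent at `q` in
the directions `±w`, then `t = 0` or `|t| ≥ 2τ·|⟨v,w⟩|`. -/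
theorem stmt_14 (E : Type*) [NormedAddCommGroup E] [InnerProductSpace ℝ E]
    (q q' : E) (τ : ℝ) (hτ : 0 < τ) (w v : E) (hw : ‖w‖ = 1) (hv : ‖v‖ = 1)
    (t : ℝ) (hq' : q' = q + t • v)
    (h1 : τ ≤ ‖q' - (q + τ • w)‖) (h2 : τ ≤ ‖q' - (q - τ • w)‖) :
    t = 0 ∨ 2 * τ * |⟪v, w⟫| ≤ |t| := by
  rcases eq_or_ne t 0 with ht | ht
  · exact Or.inl ht
  right
  have e1 : q' - (q + τ • w) = t • v - τ • w := by rw [hq']; abel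
  have e2 : q' - (q - τ • w) = t • v + τ • w := by rw [hq']; abel
  have key : ∀ s : E, τ ≤ ‖t • v - s‖ → τ ^ 2 ≤ ‖t • v - s‖ ^ 2 := fun s h =>
    pow_le_pow_left₀ hτ.le h 2
  have sq1 : τ ^ 2 ≤ ‖t • v - τ • w‖ ^ 2 := key _ (e1 ▸ h1)
  have sq2 : τ ^ 2 ≤ ‖t • v - (-τ) • w‖ ^ 2 :=
    key _ (by rw [e2] at h2; simpa [neg_smul, sub_neg_eq_add] using h2)
  have expand : ∀ c : ℝ, ‖t • v - c • w‖ ^ 2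
      = t ^ 2 - 2 * (t * c * ⟪v, w⟫) + c ^ 2 := by
    intro c
    rw [@norm_sub_sq_real, norm_smul, norm_smul, real_inner_smul_left, real_inner_smul_right,
      hv, hw]
    simp [mul_pow, sq_abs]
    ring
  rw [expand] at sq1 sq2
  have h1' : 2 * (t * τ * ⟪v, w⟫) ≤ t ^ 2 := by nlinarith
  have h2' : -(2 * (t * τ * ⟪v, w⟫)) ≤ t ^ 2 := by nlinarith
  have habs : 2 * τ * (|t| * |⟪v, w⟫|) ≤ t ^ 2 := by
    rcases abs_cases (t * ⟪v, w⟫) with ⟨he, _⟩ | ⟨he, _⟩ <;>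
      rw [abs_mul] at he <;> nlinarith
  have ht' : 0 < |t| := abs_pos.mpr ht
  nlinarith [sq_abs t]
end
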